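/- arXiv:1203.4041 — 5 statements merged into one kernel-verified Lean document; each statement's English description precedes it below -/
import Mathlib

section
/- In a series-parallel graph, a simple cycle does not cross any central cut more than twice; that is, if C⊆V is such that both C and V∖C induce connected subgraphs, then any simple cycle contains at most two edges with exactly one endpoint in C. -/
set_option linter.unusedSectionVars false
set_option linter.unnecessarySimpa false
set_option linter.unnecessarySeqFocus false
set_option maxHeartbeats 1000000

/-- `G` has a minor isomorphic to the pattern graph `P`: there are disjoint
nonempty connected branch sets, one for each vertex of `P`, with an edge of
`G` between the branch sets of any two adjacent vertices of `P`. -/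
def HasMinorPattern {V W : Type*} (G : SimpleGraph V) (P : SimpleGraph W) : Prop :=
  ∃ B : W → Set V,
    (∀ i, (B i).Nonempty) ∧
    (∀ i, (G.induce (B i)).Connected) ∧
    (Pairwise fun i j => Disjoint (B i) (B j)) ∧
    (∀ i j, P.Adj i j → ∃ u ∈ B i, ∃ v ∈ B j, G.Adj u v)

/-- A graph is series-parallel iff it has no `K₄` minor. -/
def SeriesParallel {V : Type*} (G : SimpleGraph V) : Prop :=
  ¬ HasMinorPattern G (⊤ : SimpleGraph (Fin 4))

open SimpleGraph List

namespace SP4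

variable {V : Type*} [DecidableEq V] {G : SimpleGraph V} (C : Set V) [DecidablePred (· ∈ C)]



def cross (d : G.Dart) : Bool :=
  decide ((d.toProd.1 ∈ C ∧ d.toProd.2 ∉ C) ∨ (d.toProd.1 ∉ C ∧ d.toProd.2 ∈ C))

lemma cross_iff (d : G.Dart) : cross C d = true ↔ ¬ (d.toProd.1 ∈ C ↔ d.toProd.2 ∈ C) := by
  unfold cross
  by_cases h1 : d.toProd.1 ∈ C <;> by_cases h2 : d.toProd.2 ∈ C <;> simp [h1, h2]

def cnt {u v : V} (w : G.Walk u v) : ℕ := w.darts.countP (cross C)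

@[simp] lemma cnt_nil {u : V} : cnt C (SimpleGraph.Walk.nil : G.Walk u u) = 0 := rfl

lemma cnt_append {u v w : V} (p : G.Walk u v) (q : G.Walk v w) :
    cnt C (p.append q) = cnt C p + cnt C q := by
  unfold cnt
  rw [SimpleGraph.Walk.darts_append, List.countP_append]

lemma cnt_cons {u v w : V} (h : G.Adj u v) (p : G.Walk v w) :
    cnt C (SimpleGraph.Walk.cons h p) = (if cross C ⟨(u,v), h⟩ then 1 else 0) + cnt C p := by
  unfold cnt
  rw [SimpleGraph.Walk.darts_cons, List.countP_cons]
  rcases Bool.eq_false_or_eq_true (cross C ⟨(u,v), h⟩) with h' | h' <;> simp [h'] <;> omega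

lemma parity {u v : V} (w : G.Walk u v) : ((u ∈ C) ↔ (v ∈ C)) ↔ Even (cnt C w) := by
  induction w with
  | nil => simp
  | @cons a b c h t ih =>
    rw [cnt_cons]
    by_cases hc : cross C ⟨(a,b), h⟩ = true
    · have hab : ¬((a ∈ C) ↔ (b ∈ C)) := (cross_iff C _).1 hc
      rw [if_pos hc, Nat.add_comm, Nat.even_add_one, ← ih]
      tauto
    · have hab : (a ∈ C) ↔ (b ∈ C) := by
        by_contra hcc; exact hc ((cross_iff C _).2 hcc)
      rw [if_neg hc, Nat.zero_add, ← ih]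
      tauto

lemma exists_notMem_of_cnt_pos {u v : V} (w : G.Walk u v) (hw : 0 < cnt C w) :
    ∃ z ∈ w.support, z ∉ C := by
  obtain ⟨d, hd, hcd⟩ := List.countP_pos_iff.mp hw
  rw [cross_iff] at hcd
  by_cases h1 : d.toProd.1 ∈ C
  · exact ⟨d.toProd.2, w.dart_snd_mem_support_of_mem_darts hd, fun h2 => hcd ⟨fun _ => h2, fun _ => h1⟩⟩
  · exact ⟨d.toProd.1, w.dart_fst_mem_support_of_mem_darts hd, h1⟩




lemma takeUntil_head {a c : V} (p : G.Walk a c) (h : a ∈ p.support) :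
    p.takeUntil a h = SimpleGraph.Walk.nil := by
  cases p <;> simp [SimpleGraph.Walk.takeUntil]

lemma takeUntil_cons {a b c u : V} (h : G.Adj a b) (t : G.Walk b c) (hu : u ∈ t.support)
    (hne : a ≠ u) :
    (Walk.cons h t).takeUntil u (by simp [hu]) = Walk.cons h (t.takeUntil u hu) := by
  simp only [SimpleGraph.Walk.takeUntil]
  rw [dif_neg hne]

lemma dropUntil_cons {a b c u : V} (h : G.Adj a b) (t : G.Walk b c) (hu : u ∈ t.support)
    (hne : a ≠ u) :
    (Walk.cons h t).dropUntil u (by simp [hu]) = t.dropUntil u hu := by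
  simp only [SimpleGraph.Walk.dropUntil]
  rw [dif_neg hne]

lemma mem_support_cons_elim {a b c u : V} {h : G.Adj a b} {t : G.Walk b c}
    (hu : u ∈ (Walk.cons h t).support) (hne : a ≠ u) : u ∈ t.support := by
  rcases (SimpleGraph.Walk.mem_support_iff _).1 hu with h1 | h1
  · exact absurd h1.symm hne
  · exact h1

lemma takeUntil_takeUntil' {a c : V} (p : G.Walk a c) (y : V) (hy : y ∈ p.support)
    (x : V) (hx : x ∈ (p.takeUntil y hy).support) :
    (p.takeUntil y hy).takeUntil x hx
      = p.takeUntil x ((p.support_takeUntil_subset hy) hx) := by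
  induction p with
  | nil =>
    obtain rfl : y = _ := by simpa using hy
    obtain rfl : x = y := by simpa [takeUntil_head] using hx
    simp [takeUntil_head]
  | @cons a b c h t ih =>
    by_cases hya : a = y
    · subst hya
      simp only [takeUntil_head] at hx ⊢
      obtain rfl : x = a := by simpa using hx
      simp [takeUntil_head]
    · have hy' : y ∈ t.support := mem_support_cons_elim hy hya
      have hTU : (Walk.cons h t).takeUntil y hy = Walk.cons h (t.takeUntil y hy') :=
        takeUntil_cons h t hy' hya
      by_cases hxa : a = x
      · subst hxa
        rw [takeUntil_head]
        rw [takeUntil_head]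
      · have hx2 : x ∈ (Walk.cons h (t.takeUntil y hy')).support := hTU ▸ hx
        have hx' : x ∈ (t.takeUntil y hy').support := mem_support_cons_elim hx2 hxa
        have hx'' : x ∈ t.support := t.support_takeUntil_subset hy' hx'
        have e1 := takeUntil_cons h t hx'' hxa
        have e2 : ((Walk.cons h t).takeUntil y hy).takeUntil x hx
            = (Walk.cons h (t.takeUntil y hy')).takeUntil x hx2 := by
          congr 1
        rw [e2, takeUntil_cons _ _ hx' hxa, ih hy' hx']
        exact e1.symm

/-- uniqueness of splitting at a vertex occurring once -/
lemma takeUntil_eq_first {a z c : V} (w1 : G.Walk a z) (w2 : G.Walk z c)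
    (hcount : (w1.append w2).support.count z = 1) :
    (w1.append w2).takeUntil z (by simp) = w1 := by
  induction w1 with
  | nil => exact takeUntil_head _ _
  | @cons a b zz h t ih =>
    have hzmem : zz ∈ (t.append w2).support := by simp
    have hsup : ((Walk.cons h t).append w2).support = a :: (t.append w2).support := by
      rw [SimpleGraph.Walk.cons_append, SimpleGraph.Walk.support_cons]
    have hne : a ≠ zz := by
      rintro rfl
      rw [hsup, List.count_cons_self] at hcount
      have h3 := List.count_pos_iff.2 hzmem
      omega
    have h2 : ((Walk.cons h t).append w2).takeUntil zz (by simp)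
        = Walk.cons h ((t.append w2).takeUntil zz hzmem) :=
      takeUntil_cons h (t.append w2) hzmem hne
    rw [h2]
    congr 1
    apply ih
    rw [hsup, List.count_cons_of_ne hne] at hcount
    exact hcount

/-- totality of the "comes before" order on a walk -/
lemma mem_takeUntil_or {a c : V} (p : G.Walk a c) (x y : V) (hx : x ∈ p.support)
    (hy : y ∈ p.support) :
    x ∈ (p.takeUntil y hy).support ∨ y ∈ (p.takeUntil x hx).support := by
  induction p with
  | nil =>
    obtain rfl : x = _ := by simpa using hx
    obtain rfl : y = x := by simpa using hy
    left
    exact SimpleGraph.Walk.start_mem_support _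
  | @cons a b c h t ih =>
    by_cases hax : a = x
    · subst hax
      left
      exact SimpleGraph.Walk.start_mem_support _
    · by_cases hay : a = y
      · subst hay
        right
        exact SimpleGraph.Walk.start_mem_support _
      · have hx' : x ∈ t.support := mem_support_cons_elim hx hax
        have hy' : y ∈ t.support := mem_support_cons_elim hy hay
        rcases ih hx' hy' with h1 | h1
        · left
          have e := takeUntil_cons h t hy' hay
          have e2 : ((Walk.cons h t).takeUntil y hy) = Walk.cons h (t.takeUntil y hy') := e
          rw [e2]
          simp [h1]
        · right
          have e2 : ((Walk.cons h t).takeUntil x hx) = Walk.cons h (t.takeUntil x hx') :=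
            takeUntil_cons h t hx' hax
          rw [e2]
          simp [h1]

/-- split a walk with a prescribed crossing count prefix -/
lemma exists_split_cnt {a c : V} (w : G.Walk a c) (t : ℕ) (ht : t ≤ cnt C w) :
    ∃ (z : V) (w1 : G.Walk a z) (w2 : G.Walk z c), w1.append w2 = w ∧ cnt C w1 = t := by
  induction w generalizing t with
  | nil =>
    have ht0 : t = 0 := Nat.le_zero.mp (by simpa [cnt] using ht)
    subst ht0
    exact ⟨_, SimpleGraph.Walk.nil, SimpleGraph.Walk.nil, rfl, by simp [cnt]⟩
  | @cons a b c h q ih =>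
    rcases Nat.eq_zero_or_pos t with rfl | htpos
    · exact ⟨a, SimpleGraph.Walk.nil, Walk.cons h q, rfl, rfl⟩
    · by_cases hc : cross C ⟨(a,b), h⟩ = true
      · have ht' : t - 1 ≤ cnt C q := by
          rw [cnt_cons, if_pos hc] at ht
          omega
        obtain ⟨z, w1, w2, happ, hcnt⟩ := ih (t-1) ht'
        refine ⟨z, Walk.cons h w1, w2, ?_, ?_⟩
        · rw [SimpleGraph.Walk.cons_append, happ]
        · rw [cnt_cons, if_pos hc, hcnt]
          omega
      · have ht' : t ≤ cnt C q := by
          rw [cnt_cons, if_neg hc] at ht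
          omega
        obtain ⟨z, w1, w2, happ, hcnt⟩ := ih t ht'
        refine ⟨z, Walk.cons h w1, w2, ?_, ?_⟩
        · rw [SimpleGraph.Walk.cons_append, happ]
        · rw [cnt_cons, if_neg hc, hcnt]
          omega

lemma end_mem_support_tail {a c : V} (w : G.Walk a c) (hw : ¬ w.Nil) : c ∈ w.support.tail := by
  cases w with
  | nil => exact absurd SimpleGraph.Walk.Nil.nil hw
  | cons h t => simpa using SimpleGraph.Walk.end_mem_support t

lemma not_nil_reverse {a c : V} (w : G.Walk a c) (hw : ¬ w.Nil) : ¬ w.reverse.Nil := by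
  rw [SimpleGraph.Walk.nil_iff_length_eq] at *
  simpa using hw

lemma exists_dropLast_walk {a c : V} (w : G.Walk a c) (hw : ¬ w.Nil) :
    ∃ (b1 : V) (w' : G.Walk a b1), G.Adj b1 c ∧ w'.support = w.support.dropLast := by
  obtain ⟨u, h, q, hq⟩ := (SimpleGraph.Walk.not_nil_iff).1 (not_nil_reverse w hw)
  refine ⟨u, q.reverse, h.symm, ?_⟩
  have h1 : w.support = q.support.reverse ++ [c] := by
    have : w.support = w.reverse.support.reverse := by
      rw [SimpleGraph.Walk.support_reverse, List.reverse_reverse]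
    rw [this, hq, SimpleGraph.Walk.support_cons]
    simp
  rw [h1, List.dropLast_concat, SimpleGraph.Walk.support_reverse]

lemma exists_interior_walk {a c : V} (w : G.Walk a c) (z : V) (hz : z ∈ w.support)
    (hza : z ≠ a) (hzc : z ≠ c) :
    ∃ (a1 b1 : V) (iw : G.Walk a1 b1), G.Adj a a1 ∧ G.Adj b1 c ∧
      iw.support = w.support.tail.dropLast := by
  have hw : ¬ w.Nil := by
    intro hn
    cases hn
    exact hza (by simpa using hz)
  obtain ⟨b, h, t, rfl⟩ := (SimpleGraph.Walk.not_nil_iff).1 hw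
  have ht : ¬ t.Nil := by
    intro hn
    cases hn
    have := mem_support_cons_elim hz (fun hh => hza hh.symm)
    exact hzc (by simpa using this)
  obtain ⟨b1, w', hadj, hsup⟩ := exists_dropLast_walk t ht
  exact ⟨b, b1, w', h, hadj, by rw [hsup]; simp⟩

lemma mem_dropLast_of_ne_getLast {α : Type*} {l : List α} {z : α} (hz : z ∈ l)
    (hne : z ≠ l.getLast (List.ne_nil_of_mem hz)) : z ∈ l.dropLast := by
  have h1 := List.dropLast_append_getLast (List.ne_nil_of_mem hz)
  rw [← h1] at hz
  rcases List.mem_append.1 hz with h2 | h2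
  · exact h2
  · simp at h2
    exact absurd h2 hne

lemma getLast_not_mem_dropLast {α : Type*} (l : List α) (hl : l ≠ []) (h : l.Nodup) :
    l.getLast hl ∉ l.dropLast := by
  intro hmem
  have h1 := List.dropLast_append_getLast hl
  rw [← h1] at h
  rw [List.nodup_append'] at h
  exact h.2.2 hmem (by simp)

lemma support_tail_getLast {a c : V} (w : G.Walk a c) (hne : w.support.tail ≠ []) :
    w.support.tail.getLast hne = c := by
  cases w with
  | nil => simp at hne
  | cons h t =>
    have h1 : (Walk.cons h t).support.tail = t.support := by simp
    have h2 := SimpleGraph.Walk.getLast_support t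
    calc (Walk.cons h t).support.tail.getLast hne
        = t.support.getLast (by simp [SimpleGraph.Walk.support_ne_nil]) := by
          congr 1
      _ = _ := SimpleGraph.Walk.getLast_support t




lemma length_take_add_drop {a c : V} (p : G.Walk a c) (u : V) (h : u ∈ p.support) :
    (p.takeUntil u h).length + (p.dropUntil u h).length = p.length := by
  conv_rhs => rw [← SimpleGraph.Walk.take_spec p h]
  rw [SimpleGraph.Walk.length_append]

lemma nil_of_length_zero {a c : V} (p : G.Walk a c) (h : p.length = 0) : a = c := by
  cases p with
  | nil => rfl
  | cons h t => simp at h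

lemma length_takeUntil_pos {a c : V} (p : G.Walk a c) (u : V) (h : u ∈ p.support)
    (hne : a ≠ u) : 0 < (p.takeUntil u h).length := by
  rcases Nat.eq_zero_or_pos (p.takeUntil u h).length with h0 | h0
  · exact absurd (nil_of_length_zero _ h0) hne
  · exact h0

lemma length_dropUntil_pos {a c : V} (p : G.Walk a c) (u : V) (h : u ∈ p.support)
    (hne : u ≠ c) : 0 < (p.dropUntil u h).length := by
  rcases Nat.eq_zero_or_pos (p.dropUntil u h).length with h0 | h0
  · exact absurd (nil_of_length_zero _ h0) hne
  · exact h0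

lemma connector (P : V → Prop) (hfun : V → ℕ) :
    ∀ (n : ℕ) {a b : V} (W : G.Walk a b), W.length ≤ n → W.IsPath →
    P a → P b → hfun a ≠ hfun b →
    ∃ (x y : V) (R : G.Walk x y), P x ∧ P y ∧ hfun x ≠ hfun y ∧ R.IsPath ∧
      (∀ z ∈ R.support, z ∈ W.support) ∧
      (∀ z ∈ R.support, z ≠ x → z ≠ y → ¬ P z) := by
  intro n
  induction n with
  | zero =>
    intro a b W hlen hpath ha hb hne
    exfalso
    have : a = b := nil_of_length_zero W (Nat.le_zero.mp hlen)
    exact hne (by rw [this])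
  | succ n ih =>
    intro a b W hlen hpath ha hb hne
    by_cases hex : ∃ c ∈ W.support, c ≠ a ∧ c ≠ b ∧ P c
    · obtain ⟨c, hc, hca, hcb, hPc⟩ := hex
      have hl1 : 0 < (W.takeUntil c hc).length := length_takeUntil_pos W c hc (fun hh => hca hh.symm)
      have hl2 : 0 < (W.dropUntil c hc).length := length_dropUntil_pos W c hc hcb
      have hsum := length_take_add_drop W c hc
      by_cases hac : hfun a = hfun c
      · have hcb' : hfun c ≠ hfun b := by rw [← hac]; exact hne
        obtain ⟨x, y, R, h1, h2, h3, h4, h5, h6⟩ :=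
          ih (W.dropUntil c hc) (by omega) (hpath.dropUntil hc) hPc hb hcb'
        exact ⟨x, y, R, h1, h2, h3, h4,
          fun z hz => W.support_dropUntil_subset hc (h5 z hz), h6⟩
      · obtain ⟨x, y, R, h1, h2, h3, h4, h5, h6⟩ :=
          ih (W.takeUntil c hc) (by omega) (hpath.takeUntil hc) ha hPc hac
        exact ⟨x, y, R, h1, h2, h3, h4,
          fun z hz => W.support_takeUntil_subset hc (h5 z hz), h6⟩
    · push_neg at hex
      exact ⟨a, b, W, ha, hb, hne, hpath, fun z hz => hz,
        fun z hz hza hzb => hex z hz hza hzb⟩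

lemma truncator (X Y : V → Prop) :
    ∀ (n : ℕ) {a b : V} (W : G.Walk a b), W.length ≤ n → W.IsPath →
    X a → Y b →
    ∃ (x y : V) (S : G.Walk x y), X x ∧ Y y ∧ S.IsPath ∧
      (∀ z ∈ S.support, z ∈ W.support) ∧
      (∀ z ∈ S.support, z ≠ x → z ≠ y → ¬ X z ∧ ¬ Y z) := by
  intro n
  induction n with
  | zero =>
    intro a b W hlen hpath ha hb
    exact ⟨a, b, W, ha, hb, hpath, fun z hz => hz, by
      intro z hz hza hzb
      have : a = b := nil_of_length_zero W (Nat.le_zero.mp hlen)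
      subst this
      have : W.support = [a] := by
        have : W.Nil := SimpleGraph.Walk.nil_iff_length_eq.2 (Nat.le_zero.mp hlen)
        exact SimpleGraph.Walk.nil_iff_support_eq.1 this
      rw [this] at hz
      simp at hz
      exact absurd hz hza⟩
  | succ n ih =>
    intro a b W hlen hpath ha hb
    by_cases hex : ∃ c ∈ W.support, c ≠ a ∧ c ≠ b ∧ (X c ∨ Y c)
    · obtain ⟨c, hc, hca, hcb, hXY⟩ := hex
      have hl1 : 0 < (W.takeUntil c hc).length := length_takeUntil_pos W c hc (fun hh => hca hh.symm)
      have hl2 : 0 < (W.dropUntil c hc).length := length_dropUntil_pos W c hc hcb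
      have hsum := length_take_add_drop W c hc
      rcases hXY with hXc | hYc
      · obtain ⟨x, y, S, h1, h2, h3, h4, h5⟩ :=
          ih (W.dropUntil c hc) (by omega) (hpath.dropUntil hc) hXc hb
        exact ⟨x, y, S, h1, h2, h3,
          fun z hz => W.support_dropUntil_subset hc (h4 z hz), h5⟩
      · obtain ⟨x, y, S, h1, h2, h3, h4, h5⟩ :=
          ih (W.takeUntil c hc) (by omega) (hpath.takeUntil hc) ha hYc
        exact ⟨x, y, S, h1, h2, h3,
          fun z hz => W.support_takeUntil_subset hc (h4 z hz), h5⟩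
    · push_neg at hex
      exact ⟨a, b, W, ha, hb, hpath, fun z hz => hz,
        fun z hz hza hzb => hex z hz hza hzb⟩


lemma cnt_pos_not_nil {a c : V} {w : G.Walk a c} (h : 0 < cnt C w) : ¬ w.Nil := by
  intro hn
  cases hn
  simp [cnt] at h

lemma mem_support_of_append {a z c : V} (w1 : G.Walk a z) (w2 : G.Walk z c) :
    z ∈ (w1.append w2).support := by simp

def gfun {v : V} (p : G.Walk v v) (z : V) : ℕ :=
  if hz : z ∈ p.support then cnt C (p.takeUntil z hz) else 0

def hfun {v : V} (p : G.Walk v v) (z : V) : ℕ :=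
  if gfun C p z = cnt C p then 0 else gfun C p z

lemma gfun_eval {v z : V} (p : G.Walk v v) (hz : z ∈ p.support) :
    gfun C p z = cnt C (p.takeUntil z hz) := dif_pos hz

lemma gfun_start {v : V} (p : G.Walk v v) : gfun C p v = 0 := by
  rw [gfun_eval C p (SimpleGraph.Walk.start_mem_support p), takeUntil_head]
  simp [cnt]

lemma count_support_cycle_le {v z : V} (p : G.Walk v v) (hp : p.IsCycle) :
    p.support.count z ≤ 2 := by
  have h1 : p.support = v :: p.support.tail := SimpleGraph.Walk.support_eq_cons p
  have h2 : p.support.tail.count z ≤ 1 := List.nodup_iff_count_le_one.1 hp.support_nodup z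
  rw [h1, List.count_cons]
  split <;> omega

lemma count_eq_one_of_ne_start {v z : V} (p : G.Walk v v) (hp : p.IsCycle)
    (hz : z ∈ p.support) (hne : z ≠ v) : p.support.count z = 1 := by
  have h1 : p.support = v :: p.support.tail := SimpleGraph.Walk.support_eq_cons p
  have hzt : z ∈ p.support.tail := by
    rw [h1] at hz
    rcases List.mem_cons.1 hz with h | h
    · exact absurd h hne
    · exact h
  have h2 : p.support.tail.count z ≤ 1 := List.nodup_iff_count_le_one.1 hp.support_nodup z
  have h3 : 0 < p.support.tail.count z := List.count_pos_iff.2 hzt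
  rw [h1, List.count_cons_of_ne (Ne.symm hne)]
  omega

lemma split_ne_start {v z : V} (p : G.Walk v v) (hp : p.IsCycle)
    (w1 : G.Walk v z) (w2 : G.Walk z v) (happ : w1.append w2 = p)
    (h1 : 0 < cnt C w1) (h2 : cnt C w1 < cnt C p) : z ≠ v := by
  rintro rfl
  have hcnt : cnt C p = cnt C w1 + cnt C w2 := by rw [← happ, cnt_append]
  have hw1 : ¬ w1.Nil := cnt_pos_not_nil C h1
  have hw2 : ¬ w2.Nil := cnt_pos_not_nil C (by omega)
  have hsup : p.support = w1.support ++ w2.support.tail := by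
    rw [← happ, SimpleGraph.Walk.support_append]
  have hv1 : z ∈ w1.support.tail := end_mem_support_tail w1 hw1
  have hv2 : z ∈ w2.support.tail := end_mem_support_tail w2 hw2
  have hc1 : 2 ≤ w1.support.count z := by
    have e : w1.support = z :: w1.support.tail := SimpleGraph.Walk.support_eq_cons w1
    rw [e, List.count_cons_self]
    have := List.count_pos_iff.2 hv1
    omega
  have hc2 : 1 ≤ w2.support.tail.count z := List.count_pos_iff.2 hv2
  have := count_support_cycle_le (z := z) p hp
  rw [hsup, List.count_append] at this
  omega

lemma gfun_eq_of_split {v z : V} (p : G.Walk v v) (w1 : G.Walk v z) (w2 : G.Walk z v)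
    (happ : w1.append w2 = p) (hcount : p.support.count z = 1) :
    gfun C p z = cnt C w1 := by
  subst happ
  rw [gfun_eval C _ (mem_support_of_append w1 w2), takeUntil_eq_first w1 w2 hcount]

lemma exists_ab {v : V} (p : G.Walk v v) (hp : p.IsCycle) (h3 : 3 ≤ cnt C p) :
    ∃ a b, ∃ (_ : a ∈ p.support) (_ : b ∈ p.support), a ∈ C ∧ b ∈ C ∧
      hfun C p a ≠ hfun C p b := by
  by_cases hvC : v ∈ C
  · obtain ⟨z, w1, w2, happ, hcnt⟩ := exists_split_cnt C p 2 (by omega)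
    have hzmem : z ∈ p.support := by rw [← happ]; exact mem_support_of_append w1 w2
    have hzC : z ∈ C := by
      have := (parity C w1).2 (by rw [hcnt]; exact ⟨1, rfl⟩)
      exact this.1 hvC
    have hzv : z ≠ v := split_ne_start C p hp w1 w2 happ (by omega) (by omega)
    have hcount : p.support.count z = 1 := count_eq_one_of_ne_start p hp hzmem hzv
    have hgz : gfun C p z = 2 := by rw [gfun_eq_of_split C p w1 w2 happ hcount, hcnt]
    refine ⟨v, z, SimpleGraph.Walk.start_mem_support p, hzmem, hvC, hzC, ?_⟩
    unfold hfun
    rw [hgz, gfun_start]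
    have hm0 : cnt C p ≠ 0 := by omega
    have hm2 : (2:ℕ) ≠ cnt C p := by omega
    simp [hm0, hm2]
  · obtain ⟨z1, w1, w2, happ1, hcnt1⟩ := exists_split_cnt C p 1 (by omega)
    obtain ⟨z3, u1, u2, happ3, hcnt3⟩ := exists_split_cnt C p 3 (by omega)
    have hz1mem : z1 ∈ p.support := by rw [← happ1]; exact mem_support_of_append w1 w2
    have hz3mem : z3 ∈ p.support := by rw [← happ3]; exact mem_support_of_append u1 u2
    have hz1C : z1 ∈ C := by
      by_contra hcc
      have := (parity C w1).1 (by tauto)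
      rw [hcnt1] at this
      simp [Nat.even_iff] at this
    have hz3C : z3 ∈ C := by
      by_contra hcc
      have := (parity C u1).1 (by tauto)
      rw [hcnt3] at this
      simp [Nat.even_iff] at this
    have hz1v : z1 ≠ v := fun hh => hvC (hh ▸ hz1C)
    have hz3v : z3 ≠ v := fun hh => hvC (hh ▸ hz3C)
    have hgz1 : gfun C p z1 = 1 :=
      (gfun_eq_of_split C p w1 w2 happ1 (count_eq_one_of_ne_start p hp hz1mem hz1v)).trans hcnt1
    have hgz3 : gfun C p z3 = 3 :=
      (gfun_eq_of_split C p u1 u2 happ3 (count_eq_one_of_ne_start p hp hz3mem hz3v)).trans hcnt3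
    refine ⟨z1, z3, hz1mem, hz3mem, hz1C, hz3C, ?_⟩
    unfold hfun
    rw [hgz1, hgz3]
    have h1m : (1:ℕ) ≠ cnt C p := by omega
    by_cases h3m : (3:ℕ) = cnt C p <;> simp [h1m, h3m]

lemma exists_walk_in (S : Set V) (hconn : (G.induce S).Connected) (a b : V)
    (ha : a ∈ S) (hb : b ∈ S) :
    ∃ W : G.Walk a b, W.IsPath ∧ ∀ z ∈ W.support, z ∈ S := by
  obtain ⟨W0⟩ := hconn ⟨a, ha⟩ ⟨b, hb⟩
  let W1 : G.Walk a b := W0.map (SimpleGraph.Embedding.induce S).toHom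
  refine ⟨(W1.toPath : G.Walk a b), (W1.toPath).2, fun z hz => ?_⟩
  have hz' : z ∈ (W0.map (SimpleGraph.Embedding.induce S).toHom).support := SimpleGraph.Walk.support_toPath_subset W1 hz
  rw [SimpleGraph.Walk.support_map] at hz'
  obtain ⟨z', _, rfl⟩ := List.mem_map.1 hz'
  exact z'.2

lemma mem_support_of_mem_tail {a c : V} {w : G.Walk a c} {z : V}
    (hz : z ∈ w.support.tail) : z ∈ w.support := by
  rw [SimpleGraph.Walk.support_eq_cons w]
  exact List.mem_cons_of_mem _ hz

lemma mem_tail_of_mem_support_ne {a c : V} {w : G.Walk a c} {z : V}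
    (hz : z ∈ w.support) (hne : z ≠ a) : z ∈ w.support.tail := by
  rw [SimpleGraph.Walk.support_eq_cons w] at hz
  rcases List.mem_cons.1 hz with h | h
  · exact absurd h hne
  · exact h

lemma build_K4 {v x y : V} (p : G.Walk v v) (hp : p.IsCycle)
    (hCc : (G.induce Cᶜ).Connected)
    (hx : x ∈ p.support) (hy : y ∈ p.support) (hxy : x ≠ y)
    (hxC : x ∈ C) (hyC : y ∈ C)
    (horder : x ∈ (p.takeUntil y hy).support)
    (hcnt1 : 0 < cnt C ((p.takeUntil y hy).dropUntil x horder))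
    (hcnt2 : 0 < cnt C (p.dropUntil y hy) + cnt C (p.takeUntil x hx))
    (R : G.Walk x y) (hRpath : R.IsPath) (hRC : ∀ z ∈ R.support, z ∈ C)
    (hRint : ∀ z ∈ R.support, z ≠ x → z ≠ y → z ∉ p.support) :
    HasMinorPattern G (⊤ : SimpleGraph (Fin 4)) := by
  classical
  set s1 : G.Walk x y := (p.takeUntil y hy).dropUntil x horder with hs1def
  set q2 : G.Walk y v := p.dropUntil y hy with hq2def
  set s0 : G.Walk v x := p.takeUntil x hx with hs0def
  set seg2 : G.Walk y x := q2.append s0 with hseg2def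
  have hs0eq : (p.takeUntil y hy).takeUntil x horder = s0 := takeUntil_takeUntil' p y hy x horder
  have hq1spec : s0.append s1 = p.takeUntil y hy := by
    rw [← hs0eq, hs1def]
    exact SimpleGraph.Walk.take_spec _ horder
  have hpspec : (p.takeUntil y hy).append q2 = p := SimpleGraph.Walk.take_spec p hy
  -- support decompositions
  have Hsupp : p.support = s0.support ++ (s1.support.tail ++ q2.support.tail) := by
    conv_lhs => rw [← hpspec]
    rw [SimpleGraph.Walk.support_append, ← hq1spec, SimpleGraph.Walk.support_append]
    rw [List.append_assoc]
  have Htail : p.support.tail = s0.support.tail ++ (s1.support.tail ++ q2.support.tail) := by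
    rw [Hsupp, List.tail_append_of_ne_nil (SimpleGraph.Walk.support_ne_nil _)]
  have tailNodup : (s0.support.tail ++ (s1.support.tail ++ q2.support.tail)).Nodup := by
    rw [← Htail]; exact hp.support_nodup
  rw [List.nodup_append'] at tailNodup
  obtain ⟨N0, rest, D0⟩ := tailNodup
  rw [List.nodup_append'] at rest
  obtain ⟨N1, N2, D12⟩ := rest
  have D01 : s0.support.tail.Disjoint s1.support.tail := fun a ha hb =>
    D0 ha (List.mem_append_left _ hb)
  have D02 : s0.support.tail.Disjoint q2.support.tail := fun a ha hb =>
    D0 ha (List.mem_append_right _ hb)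
  -- endpoints basics
  have hyv : y ≠ v := by
    intro h
    subst h
    rw [takeUntil_head] at horder
    simp at horder
    exact hxy horder
  have hq2nn : ¬ q2.Nil := fun hn => hyv (SimpleGraph.Walk.Nil.eq hn)
  have hs1nn : ¬ s1.Nil := cnt_pos_not_nil C hcnt1
  have hvq2t : v ∈ q2.support.tail := end_mem_support_tail q2 hq2nn
  have hys1t : y ∈ s1.support.tail := end_mem_support_tail s1 hs1nn
  -- key exclusion facts
  have f1 : x ∉ s1.support.tail := by
    by_cases hn : s0.Nil
    · have hxv : v = x := hn.eq
      intro hmem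
      exact D12 (hxv ▸ hmem) hvq2t
    · intro hmem
      exact D01 (end_mem_support_tail s0 hn) hmem
  have f2 : y ∉ q2.support.tail := fun hmem => D12 hys1t hmem
  have f3 : y ∉ s0.support.tail := fun hmem => D01 hmem hys1t
  -- seg2 support
  have Hseg2 : seg2.support = q2.support ++ s0.support.tail :=
    SimpleGraph.Walk.support_append q2 s0
  have Hseg2tail : seg2.support.tail = q2.support.tail ++ s0.support.tail := by
    rw [Hseg2, List.tail_append_of_ne_nil (SimpleGraph.Walk.support_ne_nil _)]
  have Nseg2tail : seg2.support.tail.Nodup := by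
    rw [Hseg2tail, List.nodup_append']
    exact ⟨N2, N0, fun a ha hb => D02 hb ha⟩
  -- membership transfers into p.support
  have sub_s1t : ∀ z ∈ s1.support.tail, z ∈ p.support := by
    intro z hz
    rw [Hsupp]
    exact List.mem_append_right _ (List.mem_append_left _ hz)
  have sub_q2t : ∀ z ∈ q2.support.tail, z ∈ p.support := by
    intro z hz
    rw [Hsupp]
    exact List.mem_append_right _ (List.mem_append_right _ hz)
  have sub_s0 : ∀ z ∈ s0.support, z ∈ p.support := by
    intro z hz
    rw [Hsupp]
    exact List.mem_append_left _ hz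
  -- crossing witnesses
  obtain ⟨z1, hz1mem, hz1C⟩ := exists_notMem_of_cnt_pos C s1 hcnt1
  have hz1x : z1 ≠ x := fun h => hz1C (h ▸ hxC)
  have hz1y : z1 ≠ y := fun h => hz1C (h ▸ hyC)
  have hcseg2 : 0 < cnt C seg2 := by
    rw [hseg2def, cnt_append]
    omega
  obtain ⟨z2, hz2mem, hz2C⟩ := exists_notMem_of_cnt_pos C seg2 hcseg2
  have hz2x : z2 ≠ x := fun h => hz2C (h ▸ hxC)
  have hz2y : z2 ≠ y := fun h => hz2C (h ▸ hyC)
  -- z's lie in interiors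
  have hz1tail : z1 ∈ s1.support.tail := mem_tail_of_mem_support_ne hz1mem hz1x
  have hs1t_ne : s1.support.tail ≠ [] := List.ne_nil_of_mem hz1tail
  have hz1int : z1 ∈ s1.support.tail.dropLast := by
    apply mem_dropLast_of_ne_getLast hz1tail
    rw [support_tail_getLast s1 (List.ne_nil_of_mem hz1tail)]
    exact hz1y
  have hz2tail : z2 ∈ seg2.support.tail := mem_tail_of_mem_support_ne hz2mem hz2y
  have hz2int : z2 ∈ seg2.support.tail.dropLast := by
    apply mem_dropLast_of_ne_getLast hz2tail
    rw [support_tail_getLast seg2 (List.ne_nil_of_mem hz2tail)]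
    exact hz2x
  -- truncated connector in the complement
  obtain ⟨W2, hW2path, hW2sub⟩ :=
    exists_walk_in Cᶜ hCc z1 z2 (Set.mem_compl hz1C) (Set.mem_compl hz2C)
  obtain ⟨x2, y2, S, hXx2, hYy2, hSpath, hSsub, hSint⟩ :=
    truncator (fun z => z ∈ s1.support ∧ z ∉ C) (fun z => z ∈ seg2.support ∧ z ∉ C)
      W2.length W2 le_rfl hW2path ⟨hz1mem, hz1C⟩ ⟨hz2mem, hz2C⟩
  have hSC : ∀ z ∈ S.support, z ∉ C := fun z hz => hW2sub z (hSsub z hz)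
  have hx2s1t : x2 ∈ s1.support.tail :=
    mem_tail_of_mem_support_ne hXx2.1 (fun h => hXx2.2 (h ▸ hxC))
  have hy2seg2t : y2 ∈ seg2.support.tail :=
    mem_tail_of_mem_support_ne hYy2.1 (fun h => hYy2.2 (h ▸ hyC))
  have hx2y2 : x2 ≠ y2 := by
    intro h
    subst h
    rw [Hseg2tail] at hy2seg2t
    rcases List.mem_append.1 hy2seg2t with h' | h'
    · exact D12 hx2s1t h'
    · exact D01 h' hx2s1t
  -- interior walks
  obtain ⟨a1, b1, iw1, hxa1, hb1y, hiw1sup⟩ := exists_interior_walk s1 z1 hz1mem hz1x hz1y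
  obtain ⟨a2, b2, iw2, hya2, hb2x, hiw2sup⟩ := exists_interior_walk seg2 z2 hz2mem hz2y hz2x
  have hRnn : ¬ R.Nil := SimpleGraph.Walk.not_nil_of_ne hxy
  obtain ⟨b3, Rw, hb3y, hRwsup⟩ := exists_dropLast_walk R hRnn
  have hSnn : ¬ S.Nil := SimpleGraph.Walk.not_nil_of_ne hx2y2
  obtain ⟨b4, Sw, hb4y2, hSwsup⟩ := exists_dropLast_walk S hSnn
  -- branch sets
  set B0 : Set V := {z | z ∈ Rw.support} with hB0def
  set B1 : Set V := {y} with hB1def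
  set B2 : Set V := {z | z ∈ iw1.support} ∪ {z | z ∈ Sw.support} with hB2def
  set B3 : Set V := {z | z ∈ iw2.support} with hB3def
  -- characterizations
  have hB0char : ∀ z ∈ Rw.support, z ∈ C ∧ z ≠ y ∧ (z = x ∨ z ∉ p.support) := by
    intro z hz
    rw [hRwsup] at hz
    have hzR : z ∈ R.support := (List.dropLast_sublist _).subset hz
    have hzy : z ≠ y := by
      intro h
      have hgl : R.support.getLast (SimpleGraph.Walk.support_ne_nil R) = y :=
        SimpleGraph.Walk.getLast_support R
      have hnm := getLast_not_mem_dropLast R.support (SimpleGraph.Walk.support_ne_nil R)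
        hRpath.support_nodup
      rw [hgl] at hnm
      exact hnm (h ▸ hz)
    refine ⟨hRC z hzR, hzy, ?_⟩
    by_cases hzx : z = x
    · exact Or.inl hzx
    · exact Or.inr (hRint z hzR hzx hzy)
  have hiw1sub : ∀ z ∈ iw1.support, z ∈ s1.support.tail := by
    intro z hz
    rw [hiw1sup] at hz
    exact (List.dropLast_sublist _).subset hz
  have hiw2sub : ∀ z ∈ iw2.support, z ∈ seg2.support.tail := by
    intro z hz
    rw [hiw2sup] at hz
    exact (List.dropLast_sublist _).subset hz
  have hSwsub : ∀ z ∈ Sw.support, z ∈ S.support := by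
    intro z hz
    rw [hSwsup] at hz
    exact (List.dropLast_sublist _).subset hz
  have hyiw1 : y ∉ iw1.support := by
    intro hmem
    rw [hiw1sup] at hmem
    have hnm := getLast_not_mem_dropLast s1.support.tail hs1t_ne N1
    rw [support_tail_getLast s1 hs1t_ne] at hnm
    exact hnm hmem
  have hxiw2 : x ∉ iw2.support := by
    intro hmem
    rw [hiw2sup] at hmem
    have hne2 : seg2.support.tail ≠ [] := List.ne_nil_of_mem hz2tail
    have hnm := getLast_not_mem_dropLast seg2.support.tail hne2 Nseg2tail
    rw [support_tail_getLast seg2 hne2] at hnm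
    exact hnm hmem
  have hyiw2 : y ∉ iw2.support := by
    intro hmem
    have := hiw2sub y hmem
    rw [Hseg2tail] at this
    rcases List.mem_append.1 this with h' | h'
    · exact f2 h'
    · exact f3 h'
  have hx2iw1 : x2 ∈ iw1.support := by
    rw [hiw1sup]
    apply mem_dropLast_of_ne_getLast hx2s1t
    rw [support_tail_getLast s1 hs1t_ne]
    exact fun h => hXx2.2 (h ▸ hyC)
  have hy2iw2 : y2 ∈ iw2.support := by
    rw [hiw2sup]
    apply mem_dropLast_of_ne_getLast hy2seg2t
    rw [support_tail_getLast seg2 (List.ne_nil_of_mem hz2tail)]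
    exact fun h => hYy2.2 (h ▸ hxC)
  have hy2Sw : y2 ∉ Sw.support := by
    intro hmem
    rw [hSwsup] at hmem
    have : S.support.getLast (SimpleGraph.Walk.support_ne_nil S) = y2 :=
      SimpleGraph.Walk.getLast_support S
    have hnm := getLast_not_mem_dropLast S.support (SimpleGraph.Walk.support_ne_nil S)
      hSpath.support_nodup
    rw [this] at hnm
    exact hnm hmem
  -- disjointness core facts
  have Dis01 : Disjoint B0 B1 := by
    rw [Set.disjoint_left]
    intro z hz hz1'
    rcases hB0char z hz with ⟨_, hzy, _⟩
    exact hzy hz1'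
  have Dis02 : Disjoint B0 B2 := by
    rw [Set.disjoint_left]
    intro z hz hz2'
    rcases hB0char z hz with ⟨hzC, _, hrest⟩
    rcases hz2' with hmem | hmem
    · have hzs1t := hiw1sub z hmem
      rcases hrest with rfl | hnp
      · exact f1 hzs1t
      · exact hnp (sub_s1t z hzs1t)
    · exact hSC z (hSwsub z hmem) hzC
  have Dis03 : Disjoint B0 B3 := by
    rw [Set.disjoint_left]
    intro z hz hz3'
    rcases hB0char z hz with ⟨hzC, _, hrest⟩
    have hzt := hiw2sub z hz3'
    rcases hrest with rfl | hnp
    · exact hxiw2 hz3'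
    · rw [Hseg2tail] at hzt
      rcases List.mem_append.1 hzt with h' | h'
      · exact hnp (sub_q2t z h')
      · exact hnp (sub_s0 z (mem_support_of_mem_tail h'))
  have Dis12 : Disjoint B1 B2 := by
    rw [Set.disjoint_left]
    intro z hz hz2'
    have hzy : z = y := hz
    rcases hz2' with hmem | hmem
    · exact hyiw1 (hzy ▸ hmem)
    · exact hSC z (hSwsub z hmem) (by rw [hzy]; exact hyC)
  have Dis13 : Disjoint B1 B3 := by
    rw [Set.disjoint_left]
    intro z hz hz3'
    have hzy : z = y := hz
    exact hyiw2 (hzy ▸ hz3')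
  have Dis23 : Disjoint B2 B3 := by
    rw [Set.disjoint_left]
    intro z hz hz3'
    have hzt := hiw2sub z hz3'
    rcases hz with hmem | hmem
    · have hzs1t := hiw1sub z hmem
      rw [Hseg2tail] at hzt
      rcases List.mem_append.1 hzt with h' | h'
      · exact D12 hzs1t h'
      · exact D01 h' hzs1t
    · have hzS := hSwsub z hmem
      have hzC : z ∉ C := hSC z hzS
      by_cases hzx2 : z = x2
      · subst hzx2
        rw [Hseg2tail] at hzt
        rcases List.mem_append.1 hzt with h' | h'
        · exact D12 hx2s1t h'
        · exact D01 h' hx2s1t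
      · by_cases hzy2 : z = y2
        · subst hzy2
          exact hy2Sw hmem
        · exact (hSint z hzS hzx2 hzy2).2 ⟨mem_support_of_mem_tail hzt, hzC⟩
  -- assemble
  have conn1 : (G.induce B1).Connected := by
    have hset : B1 = {z | z ∈ (SimpleGraph.Walk.nil : G.Walk y y).support} := by
      rw [hB1def]; ext z; simp
    rw [hset]
    exact (SimpleGraph.Walk.nil : G.Walk y y).connected_induce_support
  have conn2 : (G.induce B2).Connected :=
    SimpleGraph.induce_union_connected iw1.connected_induce_support.preconnected
      Sw.connected_induce_support.preconnected
      ⟨x2, hx2iw1, SimpleGraph.Walk.start_mem_support Sw⟩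
  have e01 : ∃ u ∈ B0, ∃ w ∈ B1, G.Adj u w :=
    ⟨b3, SimpleGraph.Walk.end_mem_support Rw, y, rfl, hb3y⟩
  have e02 : ∃ u ∈ B0, ∃ w ∈ B2, G.Adj u w :=
    ⟨x, SimpleGraph.Walk.start_mem_support Rw,
      a1, Or.inl (SimpleGraph.Walk.start_mem_support iw1), hxa1⟩
  have e03 : ∃ u ∈ B0, ∃ w ∈ B3, G.Adj u w :=
    ⟨x, SimpleGraph.Walk.start_mem_support Rw,
      b2, SimpleGraph.Walk.end_mem_support iw2, hb2x.symm⟩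
  have e12 : ∃ u ∈ B1, ∃ w ∈ B2, G.Adj u w :=
    ⟨y, rfl, b1, Or.inl (SimpleGraph.Walk.end_mem_support iw1), hb1y.symm⟩
  have e13 : ∃ u ∈ B1, ∃ w ∈ B3, G.Adj u w :=
    ⟨y, rfl, a2, SimpleGraph.Walk.start_mem_support iw2, hya2⟩
  have e23 : ∃ u ∈ B2, ∃ w ∈ B3, G.Adj u w :=
    ⟨b4, Or.inr (SimpleGraph.Walk.end_mem_support Sw), y2, hy2iw2, hb4y2⟩
  have sym : ∀ {A B : Set V}, (∃ u ∈ A, ∃ w ∈ B, G.Adj u w) →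
      ∃ u ∈ B, ∃ w ∈ A, G.Adj u w := by
    rintro A B ⟨u, hu, w, hw, huw⟩
    exact ⟨w, hw, u, hu, huw.symm⟩
  refine ⟨fun i => match i with | 0 => B0 | 1 => B1 | 2 => B2 | 3 => B3, ?_, ?_, ?_, ?_⟩
  · intro i
    fin_cases i
    · exact ⟨x, SimpleGraph.Walk.start_mem_support Rw⟩
    · exact ⟨y, rfl⟩
    · exact ⟨a1, Or.inl (SimpleGraph.Walk.start_mem_support iw1)⟩
    · exact ⟨a2, SimpleGraph.Walk.start_mem_support iw2⟩
  · intro i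
    fin_cases i
    · exact Rw.connected_induce_support
    · exact conn1
    · exact conn2
    · exact iw2.connected_induce_support
  · intro i j hij
    fin_cases i <;> fin_cases j <;>
      first
        | exact absurd rfl hij
        | exact Dis01
        | exact Dis02
        | exact Dis03
        | exact Dis12
        | exact Dis13
        | exact Dis23
        | exact Dis01.symm
        | exact Dis02.symm
        | exact Dis03.symm
        | exact Dis12.symm
        | exact Dis13.symm
        | exact Dis23.symm
  · intro i j hij
    fin_cases i <;> fin_cases j <;>
      first
        | exact e01
        | exact e02
        | exact e03
        | exact e12
        | exact e13
        | exact e23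
        | exact sym e01
        | exact sym e02
        | exact sym e03
        | exact sym e12
        | exact sym e13
        | exact sym e23
        | exact absurd hij (by decide)

lemma hfun_ne_conds {v x y : V} (p : G.Walk v v) (hx : x ∈ p.support) (hy : y ∈ p.support)
    (horder : x ∈ (p.takeUntil y hy).support)
    (hne : hfun C p x ≠ hfun C p y) :
    0 < cnt C ((p.takeUntil y hy).dropUntil x horder) ∧
    0 < cnt C (p.dropUntil y hy) + cnt C (p.takeUntil x hx) := by
  have hgx : gfun C p x = cnt C (p.takeUntil x hx) := gfun_eval C p hx
  have hgy : gfun C p y = cnt C (p.takeUntil y hy) := gfun_eval C p hy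
  have hsplit1 : cnt C (p.takeUntil y hy)
      = cnt C (p.takeUntil x hx) + cnt C ((p.takeUntil y hy).dropUntil x horder) := by
    conv_lhs => rw [← SimpleGraph.Walk.take_spec (p.takeUntil y hy) horder]
    rw [cnt_append, takeUntil_takeUntil']
  have hsplit2 : cnt C p = cnt C (p.takeUntil y hy) + cnt C (p.dropUntil y hy) := by
    conv_lhs => rw [← SimpleGraph.Walk.take_spec p hy]
    rw [cnt_append]
  constructor
  · by_contra h0
    push_neg at h0
    apply hne
    unfold hfun
    rw [hgx, hgy, hsplit1]
    have h00 : cnt C ((p.takeUntil y hy).dropUntil x horder) = 0 := by omega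
    rw [h00, Nat.add_zero]
  · by_contra h0
    push_neg at h0
    apply hne
    unfold hfun
    rw [hgx, hgy]
    have hA : cnt C (p.takeUntil x hx) = 0 := by omega
    have hym : cnt C (p.takeUntil y hy) = cnt C p := by omega
    rw [hA, hym]
    simp

theorem main_result {VV : Type*} [Fintype VV] [DecidableEq VV]
    (G : SimpleGraph VV) (hsp : ¬ HasMinorPattern G (⊤ : SimpleGraph (Fin 4)))
    (C : Set VV) [DecidablePred (· ∈ C)]
    (hC : (G.induce C).Connected) (hCc : (G.induce Cᶜ).Connected)
    {v : VV} (p : G.Walk v v) (hp : p.IsCycle) :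
    (p.darts.countP fun d =>
      decide ((d.toProd.1 ∈ C ∧ d.toProd.2 ∉ C) ∨ (d.toProd.1 ∉ C ∧ d.toProd.2 ∈ C))) ≤ 2 := by
  by_contra hgt
  push_neg at hgt
  have h3 : 3 ≤ cnt C p := hgt
  obtain ⟨a, b, ha, hb, haC, hbC, hne⟩ := exists_ab C p hp h3
  obtain ⟨W, hWpath, hWC⟩ := exists_walk_in C hC a b haC hbC
  obtain ⟨x, y, R, hxmem, hymem, hhxy, hRpath, hRsub, hRint0⟩ :=
    connector (fun z => z ∈ p.support) (hfun C p) W.length W le_rfl hWpath ha hb hne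
  have hRC : ∀ z ∈ R.support, z ∈ C := fun z hz => hWC z (hRsub z hz)
  have hxC : x ∈ C := hRC x (SimpleGraph.Walk.start_mem_support R)
  have hyC : y ∈ C := hRC y (SimpleGraph.Walk.end_mem_support R)
  have hxy : x ≠ y := fun h => hhxy (by rw [h])
  rcases mem_takeUntil_or p x y hxmem hymem with horder | horder
  · obtain ⟨hc1, hc2⟩ := hfun_ne_conds C p hxmem hymem horder hhxy
    exact hsp (build_K4 C p hp hCc hxmem hymem hxy hxC hyC horder hc1 hc2 R hRpath hRC hRint0)
  · obtain ⟨hc1, hc2⟩ := hfun_ne_conds C p hymem hxmem horder (fun h => hhxy h.symm)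
    have hRC' : ∀ z ∈ R.reverse.support, z ∈ C := by
      intro z hz
      rw [SimpleGraph.Walk.support_reverse, List.mem_reverse] at hz
      exact hRC z hz
    have hRint' : ∀ z ∈ R.reverse.support, z ≠ y → z ≠ x → z ∉ p.support := by
      intro z hz hzy hzx
      rw [SimpleGraph.Walk.support_reverse, List.mem_reverse] at hz
      exact hRint0 z hz hzx hzy
    exact hsp (build_K4 C p hp hCc hymem hxmem (fun h => hxy h.symm) hyC hxC horder hc1 hc2
      R.reverse hRpath.reverse hRC' hRint')

end SP4


/-- In a series-parallel graph, a simple cycle crosses any central cut at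
most twice. -/
theorem stmt4 {V : Type*} [Fintype V] [DecidableEq V]
    (G : SimpleGraph V) (hsp : SeriesParallel G)
    (C : Set V) [DecidablePred (· ∈ C)]
    (hC : (G.induce C).Connected) (hCc : (G.induce Cᶜ).Connected)
    {v : V} (p : G.Walk v v) (hp : p.IsCycle) :
    (p.darts.countP fun d =>
      decide ((d.toProd.1 ∈ C ∧ d.toProd.2 ∉ C) ∨ (d.toProd.1 ∉ C ∧ d.toProd.2 ∈ C))) ≤ 2 := by
  exact SP4.main_result G hsp C hC hCc p hp
end

section
/- In a 2-connected graph G, for any two vertices s and t and any edge (u,v), there is a simple path from s to t that uses the edge (u,v). -/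
open SimpleGraph Walk Sum

namespace TwoConnAux

variable {V : Type*}

/-- Avoidance connectivity: between any two vertices different from `x`,
there is a walk avoiding `x`. -/
def AvoidConn (Γ : SimpleGraph V) : Prop :=
  ∀ x a b : V, a ≠ x → b ≠ x → ∃ w : Γ.Walk a b, x ∉ w.support

lemma avoid_walk {G : SimpleGraph V} {x : V}
    (h : (G.induce ({x}ᶜ : Set V)).Connected) {a b : V} (ha : a ≠ x) (hb : b ≠ x) :
    ∃ w : G.Walk a b, x ∉ w.support := by
  obtain ⟨w⟩ := h.preconnected ⟨a, Set.mem_compl_singleton_iff.mpr ha⟩ ⟨b, Set.mem_compl_singleton_iff.mpr hb⟩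
  refine ⟨(w.map (SimpleGraph.Embedding.induce ({x}ᶜ : Set V)).toHom : G.Walk a b), ?_⟩
  show x ∉ (w.map (SimpleGraph.Embedding.induce ({x}ᶜ : Set V)).toHom).support
  rw [Walk.support_map]
  intro hmem
  obtain ⟨⟨y, hy⟩, -, h2⟩ := List.mem_map.mp hmem
  exact hy h2

lemma exists_third [Fintype V] [DecidableEq V] (hcard : 3 ≤ Fintype.card V) (a b : V) :
    ∃ c : V, c ≠ a ∧ c ≠ b := by
  by_contra h
  push_neg at h
  have hsub : (Finset.univ : Finset V) ⊆ {a, b} := by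
    intro e _
    rcases Classical.em (e = a) with he | he
    · simp [he]
    · simp [h e he]
  have := Finset.card_le_card hsub
  rw [Finset.card_univ] at this
  have h2 : ({a, b} : Finset V).card ≤ 2 := Finset.card_insert_le _ _ |>.trans (by simp)
  omega

lemma exists_other_nbr [Fintype V] [DecidableEq V] {Γ : SimpleGraph V} (hcard : 3 ≤ Fintype.card V)
    (hconn : AvoidConn Γ) {a b : V} (hab : Γ.Adj a b) :
    ∃ c, Γ.Adj a c ∧ c ≠ b := by
  obtain ⟨e, hea, heb⟩ := exists_third hcard a b
  obtain ⟨w, hw⟩ := hconn b a e hab.ne heb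
  cases w with
  | nil => exact absurd rfl hea.symm
  | cons h p =>
    refine ⟨_, h, fun hc => hw ?_⟩
    subst hc
    simp [Walk.support_cons]

lemma first_in_set {Γ : SimpleGraph V} {a b : V} (r0 : Γ.Walk a b)
    (S : Set V) [DecidablePred (· ∈ S)] (hb : b ∈ S) :
    ∃ (x : V) (_ : x ∈ S) (r : Γ.Walk a x),
      (∀ y ∈ r.support, y ∈ r0.support) ∧ ∀ y ∈ r.support, y ∈ S → y = x := by
  induction r0 with
  | nil => exact ⟨_, hb, Walk.nil, by simp, by simp⟩
  | @cons a c b h p ih =>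
    by_cases haS : a ∈ S
    · exact ⟨a, haS, Walk.nil, by simp, by simp⟩
    · obtain ⟨x, hx, r, h1, h2⟩ := ih hb
      refine ⟨x, hx, Walk.cons h r, ?_, ?_⟩
      · intro y hy
        rw [Walk.support_cons] at hy ⊢
        rcases List.mem_cons.mp hy with rfl | hy
        · exact List.mem_cons_self
        · exact List.mem_cons_of_mem _ (h1 y hy)
      · intro y hy hyS
        rw [Walk.support_cons] at hy
        rcases List.mem_cons.mp hy with rfl | hy
        · exact absurd hyS haS
        · exact h2 y hy hyS

lemma split_support {Γ : SimpleGraph V} [DecidableEq V] {a b x : V} {p : Γ.Walk a b}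
    (hp : p.IsPath) (hx : x ∈ p.support) :
    ∀ y, y ∈ (p.takeUntil x hx).support → y ∈ (p.dropUntil x hx).support → y = x := by
  intro y h1 h2
  have hnd : p.support.Nodup := hp.support_nodup
  conv at hnd => rw [← p.take_spec hx]
  rw [Walk.support_append] at hnd
  rw [(p.dropUntil x hx).support_eq_cons] at h2
  rcases List.mem_cons.mp h2 with h2 | h2
  · exact h2
  · exact absurd h2 (List.disjoint_of_nodup_append hnd h1)

lemma one_le_length {Γ : SimpleGraph V} {a b : V} (p : Γ.Walk a b) (h : a ≠ b) :
    1 ≤ p.length := by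
  by_contra hl
  exact h (Walk.eq_of_length_eq_zero (Nat.lt_one_iff.mp (not_le.mp hl)))


section Cyc

variable {Γ : SimpleGraph V}

/-- Two internally disjoint paths between `a` and `b`, the second of length ≥ 2. -/
def Cyc (Γ : SimpleGraph V) (a b : V) : Prop :=
  ∃ (P Q : Γ.Walk a b), P.IsPath ∧ Q.IsPath ∧ 2 ≤ Q.length ∧
    ∀ y, y ∈ P.support → y ∈ Q.support → y = a ∨ y = b

lemma append_isPath {a b c : V} {p : Γ.Walk a c} {q : Γ.Walk c b}
    (hp : p.IsPath) (hq : q.IsPath)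
    (hdisj : ∀ y, y ∈ p.support → y ∈ q.support → y = c) : (p.append q).IsPath := by
  rw [Walk.isPath_def, Walk.support_append]
  have htail : q.support.tail.Nodup := by
    have := hq.support_nodup
    rw [q.support_eq_cons] at this
    exact (List.nodup_cons.mp this).2
  refine List.Nodup.append hp.support_nodup htail ?_
  intro y hyp hyq
  have hyq' : y ∈ q.support := by
    rw [q.support_eq_cons]; exact List.mem_cons_of_mem _ hyq
  have hyc := hdisj y hyp hyq'
  subst hyc
  have := hq.support_nodup
  rw [q.support_eq_cons] at this
  exact (List.nodup_cons.mp this).1 hyq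

lemma base [Fintype V] [DecidableEq V] (hcard : 3 ≤ Fintype.card V)
    (hconn : AvoidConn Γ) {a b : V} (hab : Γ.Adj a b) : Cyc Γ a b := by
  obtain ⟨c, hac, hcb⟩ := exists_other_nbr hcard hconn hab
  obtain ⟨q0, hq0⟩ := hconn a c b hac.ne' hab.ne'
  refine ⟨Walk.cons hab Walk.nil, Walk.cons hac q0.toPath, by simp [hab.ne], ?_, ?_, ?_⟩
  · rw [Walk.cons_isPath_iff]
    exact ⟨q0.toPath.2, fun hmem => hq0 (q0.support_toPath_subset hmem)⟩
  · have : 1 ≤ (q0.toPath : Γ.Walk c b).length := one_le_length _ hcb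
    rw [Walk.length_cons]; omega
  · intro y hy _
    simpa using hy

lemma step [Fintype V] [DecidableEq V] (hconn : AvoidConn Γ) {a w b : V}
    (hwb : w ≠ b) (hcyc : Cyc Γ w b) (haw : Γ.Adj a w) (hab : a ≠ b) : Cyc Γ a b := by
  classical
  obtain ⟨P, Q, hP, hQ, hQ2, hdisjPQ⟩ := hcyc
  have haw' : a ≠ w := haw.ne
  by_cases hPa : a ∈ P.support
  · -- split P at a
    have hbP2 : b ∈ (P.dropUntil a hPa).support := Walk.end_mem_support _
    have hba : b ∉ (P.takeUntil a hPa).support := by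
      intro hmem
      exact hab (split_support hP hPa b hmem hbP2).symm
    refine ⟨P.dropUntil a hPa, (P.takeUntil a hPa).reverse.append Q,
      hP.dropUntil hPa, ?_, ?_, ?_⟩
    · refine append_isPath ((P.takeUntil a hPa).isPath_reverse_iff.mpr (hP.takeUntil hPa)) hQ ?_
      intro y hy1 hy2
      rw [Walk.support_reverse, List.mem_reverse] at hy1
      have hyP : y ∈ P.support := Walk.support_takeUntil_subset _ _ hy1
      rcases hdisjPQ y hyP hy2 with rfl | rfl
      · rfl
      · exact absurd hy1 hba
    · rw [Walk.length_append]; omega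
    · intro y hy1 hy2
      rw [Walk.mem_support_append_iff] at hy2
      rcases hy2 with hy2 | hy2
      · rw [Walk.support_reverse, List.mem_reverse] at hy2
        exact Or.inl (split_support hP hPa y hy2 hy1)
      · have hyP : y ∈ P.support := Walk.support_dropUntil_subset _ _ hy1
        rcases hdisjPQ y hyP hy2 with rfl | rfl
        · exact absurd (split_support hP hPa y (Walk.start_mem_support _) hy1) haw'.symm
        · exact Or.inr rfl
  · by_cases hQa : a ∈ Q.support
    · -- split Q at a
      have hba : b ∉ (Q.takeUntil a hQa).support := by
        intro hmem
        exact hab (split_support hQ hQa b hmem (Walk.end_mem_support _)).symm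
      refine ⟨Q.dropUntil a hQa, (Q.takeUntil a hQa).reverse.append P,
        hQ.dropUntil hQa, ?_, ?_, ?_⟩
      · refine append_isPath ((Q.takeUntil a hQa).isPath_reverse_iff.mpr (hQ.takeUntil hQa)) hP ?_
        intro y hy1 hy2
        rw [Walk.support_reverse, List.mem_reverse] at hy1
        have hyQ : y ∈ Q.support := Walk.support_takeUntil_subset _ _ hy1
        rcases hdisjPQ y hy2 hyQ with rfl | rfl
        · rfl
        · exact absurd hy1 hba
      · have h1 : 1 ≤ (Q.takeUntil a hQa).length := one_le_length _ haw'.symm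
        have h2 : 1 ≤ P.length := one_le_length _ hwb
        rw [Walk.length_append, Walk.length_reverse]; omega
      · intro y hy1 hy2
        rw [Walk.mem_support_append_iff] at hy2
        rcases hy2 with hy2 | hy2
        · rw [Walk.support_reverse, List.mem_reverse] at hy2
          exact Or.inl (split_support hQ hQa y hy2 hy1)
        · have hyQ : y ∈ Q.support := Walk.support_dropUntil_subset _ _ hy1
          rcases hdisjPQ y hy2 hyQ with rfl | rfl
          · exact absurd (split_support hQ hQa y (Walk.start_mem_support _) hy1) haw'.symm
          · exact Or.inr rfl
    · -- a outside both P and Q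
      obtain ⟨r0, hr0⟩ := hconn w a b haw' (Ne.symm hwb)
      have hrp : w ∉ (r0.toPath : Γ.Walk a b).support :=
        fun hm => hr0 (r0.support_toPath_subset hm)
      obtain ⟨x, hxS, r1, hr1sub, hr1first⟩ :=
        first_in_set (r0.toPath : Γ.Walk a b)
          {y | y ∈ P.support ∨ y ∈ Q.support} (Or.inl (Walk.end_mem_support _))
      set r : Γ.Walk a x := (r1.toPath : Γ.Walk a x) with hr
      have hrpath : r.IsPath := r1.toPath.2
      have hrsub : ∀ y ∈ r.support, y ∈ r1.support := fun y hy => r1.support_toPath_subset hy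
      have hwr : w ∉ r.support := fun hm => hrp (hr1sub w (hrsub w hm))
      have hrfirst : ∀ y ∈ r.support, (y ∈ P.support ∨ y ∈ Q.support) → y = x :=
        fun y hy hS => hr1first y (hrsub y hy) hS
      have hxw : x ≠ w := fun h => hwr (h ▸ Walk.end_mem_support r)
      rcases hxS with hxP | hxQ
      · -- x on P
        refine ⟨r.append (P.dropUntil x hxP), Walk.cons haw Q, ?_, ?_, ?_, ?_⟩
        · refine append_isPath hrpath (hP.dropUntil hxP) ?_
          intro y hy1 hy2
          exact hrfirst y hy1 (Or.inl (Walk.support_dropUntil_subset _ _ hy2))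
        · rw [Walk.cons_isPath_iff]; exact ⟨hQ, hQa⟩
        · rw [Walk.length_cons]; omega
        · intro y hy1 hy2
          rw [Walk.mem_support_append_iff] at hy1
          rw [Walk.support_cons, List.mem_cons] at hy2
          rcases hy2 with rfl | hy2
          · exact Or.inl rfl
          · rcases hy1 with hy1 | hy1
            · have hyx := hrfirst y hy1 (Or.inr hy2)
              subst hyx
              rcases hdisjPQ y hxP hy2 with rfl | rfl
              · exact absurd rfl hxw
              · exact Or.inr rfl
            · have hyP : y ∈ P.support := Walk.support_dropUntil_subset _ _ hy1
              rcases hdisjPQ y hyP hy2 with rfl | rfl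
              · exact absurd (split_support hP hxP y (Walk.start_mem_support _) hy1) (Ne.symm hxw)
              · exact Or.inr rfl
      · -- x on Q
        refine ⟨r.append (Q.dropUntil x hxQ), Walk.cons haw P, ?_, ?_, ?_, ?_⟩
        · refine append_isPath hrpath (hQ.dropUntil hxQ) ?_
          intro y hy1 hy2
          exact hrfirst y hy1 (Or.inr (Walk.support_dropUntil_subset _ _ hy2))
        · rw [Walk.cons_isPath_iff]; exact ⟨hP, hPa⟩
        · have h2 : 1 ≤ P.length := one_le_length _ hwb
          rw [Walk.length_cons]; omega
        · intro y hy1 hy2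
          rw [Walk.mem_support_append_iff] at hy1
          rw [Walk.support_cons, List.mem_cons] at hy2
          rcases hy2 with rfl | hy2
          · exact Or.inl rfl
          · rcases hy1 with hy1 | hy1
            · have hyx := hrfirst y hy1 (Or.inl hy2)
              subst hyx
              rcases hdisjPQ y hy2 hxQ with rfl | rfl
              · exact absurd rfl hxw
              · exact Or.inr rfl
            · have hyQ : y ∈ Q.support := Walk.support_dropUntil_subset _ _ hy1
              rcases hdisjPQ y hy2 hyQ with rfl | rfl
              · exact absurd (split_support hQ hxQ y (Walk.start_mem_support _) hy1) (Ne.symm hxw)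
              · exact Or.inr rfl

end Cyc

lemma lemA {Γ : SimpleGraph V} [Fintype V] [DecidableEq V] (hcard : 3 ≤ Fintype.card V)
    (hconn : AvoidConn Γ) {a b : V} (hab : a ≠ b) : Cyc Γ a b := by
  suffices H : ∀ n : ℕ, ∀ {a b : V} (p : Γ.Walk a b), p.IsPath → p.length ≤ n → a ≠ b →
      Cyc Γ a b by
    obtain ⟨x, hxa, hxb⟩ := exists_third hcard a b
    obtain ⟨w0, -⟩ := hconn x a b (Ne.symm hxa) (Ne.symm hxb)
    exact H _ (w0.toPath : Γ.Walk a b) w0.toPath.2 le_rfl hab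
  intro n
  induction n with
  | zero =>
    intro a b p hp hl hab
    exact absurd (Walk.eq_of_length_eq_zero (Nat.le_zero.mp hl)) hab
  | succ n ih =>
    intro a b p hp hl hab
    cases p with
    | nil => exact absurd rfl hab
    | @cons _ w _ h q =>
      have hq : q.IsPath := (Walk.cons_isPath_iff h q |>.mp hp).1
      by_cases hwb : w = b
      · subst hwb
        exact base hcard hconn h
      · refine step hconn hwb (ih q hq ?_ hwb) h hab
        rw [Walk.length_cons] at hl
        omega

section Hgraph

variable (G : SimpleGraph V) (s t u v : V)

/-- Auxiliary graph: `G` with the edge `uv` subdivided by `inr false`, plus a new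
vertex `inr true` joined to `s` and `t`. -/
def HG : SimpleGraph (V ⊕ Bool) where
  Adj x y := match x, y with
    | inl a, inl b => G.Adj a b ∧ s(a, b) ≠ s(u, v)
    | inl a, inr c => if c then a = s ∨ a = t else a = u ∨ a = v
    | inr c, inl a => if c then a = s ∨ a = t else a = u ∨ a = v
    | inr _, inr _ => False
  symm := by
    constructor
    rintro (a | c) (b | d) h
    · exact ⟨h.1.symm, fun he => h.2 (Sym2.eq_swap.trans he)⟩
    · exact h
    · exact h
    · exact h
  loopless := by
    constructor
    rintro (a | c) h
    · exact h.1.ne rfl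
    · exact h

lemma HG_adj_inl_inl (a' b' : V) :
    (HG G s t u v).Adj (inl a') (inl b') ↔ G.Adj a' b' ∧ s(a', b') ≠ s(u, v) := Iff.rfl

lemma HG_adj_inl_inr (a' : V) (c : Bool) :
    (HG G s t u v).Adj (inl a') (inr c) ↔
      (if c then a' = s ∨ a' = t else a' = u ∨ a' = v) := Iff.rfl

lemma HG_adj_inr_inl (a' : V) (c : Bool) :
    (HG G s t u v).Adj (inr c) (inl a') ↔
      (if c then a' = s ∨ a' = t else a' = u ∨ a' = v) := Iff.rfl

lemma HG_adj_inr_inr (c d : Bool) :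
    (HG G s t u v).Adj (inr c) (inr d) ↔ False := Iff.rfl

variable {G s t u v}

lemma adj_um : (HG G s t u v).Adj (inl u) (inr false) := by
  rw [HG_adj_inl_inr]; simp

lemma adj_vm : (HG G s t u v).Adj (inl v) (inr false) := by
  rw [HG_adj_inl_inr]; simp

lemma adj_mu : (HG G s t u v).Adj (inr false) (inl u) := by
  rw [HG_adj_inr_inl]; simp

lemma adj_mv : (HG G s t u v).Adj (inr false) (inl v) := by
  rw [HG_adj_inr_inl]; simp

lemma adj_zs : (HG G s t u v).Adj (inr true) (inl s) := by
  rw [HG_adj_inr_inl]; simp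

lemma adj_zt : (HG G s t u v).Adj (inr true) (inl t) := by
  rw [HG_adj_inr_inl]; simp

/-- Lift a `G`-walk to an `HG`-walk, routing any use of the edge `uv` through
the subdivision vertex `inr false`. -/
lemma lift_exists (huv : G.Adj u v) {a b : V} (w : G.Walk a b) :
    ∃ W : (HG G s t u v).Walk (inl a) (inl b),
      ∀ y ∈ W.support, (∃ c ∈ w.support, y = inl c) ∨
        (y = inr false ∧ s(u, v) ∈ w.edges) := by
  classical
  induction w with
  | nil => exact ⟨Walk.nil, by simp⟩
  | @cons a c b h p ih =>
    obtain ⟨W, hW⟩ := ih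
    have hrest : ∀ y ∈ W.support, (∃ c' ∈ (Walk.cons h p).support, y = inl c') ∨
        (y = inr false ∧ s(u, v) ∈ (Walk.cons h p).edges) := by
      intro y hy
      rcases hW y hy with ⟨c', hc', rfl⟩ | ⟨rfl, he⟩
      · exact Or.inl ⟨c', by rw [Walk.support_cons]; exact List.mem_cons_of_mem _ hc', rfl⟩
      · exact Or.inr ⟨rfl, by rw [Walk.edges_cons]; exact List.mem_cons_of_mem _ he⟩
    by_cases hac : s(a, c) = s(u, v)
    · have hedge : s(u, v) ∈ (Walk.cons h p).edges := by
        rw [Walk.edges_cons]; exact hac ▸ List.mem_cons_self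
      rcases Sym2.eq_iff.mp hac with ⟨rfl, rfl⟩ | ⟨rfl, rfl⟩
      · refine ⟨Walk.cons adj_um (Walk.cons adj_mv W), ?_⟩
        intro y hy
        rw [Walk.support_cons, Walk.support_cons] at hy
        rcases List.mem_cons.mp hy with rfl | hy
        · exact Or.inl ⟨_, Walk.start_mem_support _, rfl⟩
        rcases List.mem_cons.mp hy with rfl | hy
        · exact Or.inr ⟨rfl, hedge⟩
        · exact hrest y hy
      · refine ⟨Walk.cons adj_vm (Walk.cons adj_mu W), ?_⟩
        intro y hy
        rw [Walk.support_cons, Walk.support_cons] at hy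
        rcases List.mem_cons.mp hy with rfl | hy
        · exact Or.inl ⟨_, Walk.start_mem_support _, rfl⟩
        rcases List.mem_cons.mp hy with rfl | hy
        · exact Or.inr ⟨rfl, hedge⟩
        · exact hrest y hy
    · refine ⟨Walk.cons ((HG_adj_inl_inl G s t u v a c).mpr ⟨h, hac⟩) W, ?_⟩
      intro y hy
      rw [Walk.support_cons] at hy
      rcases List.mem_cons.mp hy with rfl | hy
      · exact Or.inl ⟨_, Walk.start_mem_support _, rfl⟩
      · exact hrest y hy

/-- Project an `HG`-walk that avoids both extra vertices down to a `G`-walk. -/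
lemma down_exists {x y : V ⊕ Bool} (w : (HG G s t u v).Walk x y)
    (hw : ∀ z ∈ w.support, z ≠ inr false ∧ z ≠ inr true) :
    ∀ {a b : V}, x = inl a → y = inl b →
      ∃ g : G.Walk a b, g.support.map inl = w.support := by
  induction w with
  | nil =>
    rintro a b rfl h2
    obtain rfl : a = b := by injection h2
    exact ⟨Walk.nil, by simp⟩
  | @cons x z y h p ih =>
    rintro a b rfl h2
    have hz : z ∈ (Walk.cons h p).support := by
      rw [Walk.support_cons]
      exact List.mem_cons_of_mem _ (Walk.start_mem_support _)
    rcases z with c | cc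
    · have hadj : G.Adj a c := ((HG_adj_inl_inl G s t u v a c).mp h).1
      have hw' : ∀ z ∈ p.support, z ≠ inr false ∧ z ≠ inr true := by
        intro z hzp
        exact hw z (by rw [Walk.support_cons]; exact List.mem_cons_of_mem _ hzp)
      obtain ⟨g, hg⟩ := ih hw' rfl h2
      exact ⟨Walk.cons hadj g, by rw [Walk.support_cons, Walk.support_cons, List.map_cons, hg]⟩
    · rcases cc with _ | _
      · exact absurd rfl (hw _ hz).1
      · exact absurd rfl (hw _ hz).2

/-- A walk in `G` avoiding the edge `uv`. -/
lemma no_uv_walk [Fintype V] [DecidableEq V] (hcard : 3 ≤ Fintype.card V)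
    (hGavoid : AvoidConn G) (huv : G.Adj u v) (a b : V) :
    ∃ w : G.Walk a b, s(u, v) ∉ w.edges := by
  classical
  have aux : ∀ b' : V, b' ≠ u → ∃ w : G.Walk u b', s(u, v) ∉ w.edges := by
    intro b' hb'
    obtain ⟨c, huc, hcv⟩ := exists_other_nbr hcard hGavoid huv
    obtain ⟨w2, hw2⟩ := hGavoid u c b' huc.ne' hb'
    refine ⟨Walk.cons huc w2, ?_⟩
    rw [Walk.edges_cons]
    intro hmem
    rcases List.mem_cons.mp hmem with he | he
    · rcases Sym2.eq_iff.mp he with ⟨-, h2⟩ | ⟨-, h2⟩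
      · exact hcv h2.symm
      · exact huv.ne h2.symm
    · exact hw2 (Walk.fst_mem_support_of_mem_edges _ he)
  by_cases hau : a = u
  · subst hau
    by_cases hbu : b = a
    · subst hbu; exact ⟨Walk.nil, by simp⟩
    · exact aux b (fun h => hbu h)
  · by_cases hbu : b = u
    · subst hbu
      obtain ⟨w, hw⟩ := aux a hau
      exact ⟨w.reverse, by rwa [Walk.edges_reverse, List.mem_reverse]⟩
    · obtain ⟨w, hw⟩ := hGavoid u a b hau hbu
      exact ⟨w, fun he => hw (Walk.fst_mem_support_of_mem_edges _ he)⟩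

lemma glue {W : Type*} {H : SimpleGraph W} {x a b a' b' : W}
    (da : H.Walk a a') (db : H.Walk b b') (core : H.Walk a' b')
    (h1 : x ∉ da.support) (h3 : x ∉ core.support) (h2 : x ∉ db.support) :
    ∃ w : H.Walk a b, x ∉ w.support := by
  refine ⟨da.append (core.append db.reverse), ?_⟩
  intro hm
  rw [Walk.mem_support_append_iff, Walk.mem_support_append_iff, Walk.support_reverse,
    List.mem_reverse] at hm
  rcases hm with hm | hm | hm
  exacts [h1 hm, h3 hm, h2 hm]

lemma hconnH [Fintype V] [DecidableEq V] (hcard : 3 ≤ Fintype.card V)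
    (hGconn : G.Connected) (hGavoid : AvoidConn G) (hst : s ≠ t) (huv : G.Adj u v) :
    AvoidConn (HG G s t u v) := by
  classical
  intro x a b hax hbx
  rcases x with x' | c
  · -- avoiding `inl x'`
    have core : ∀ a' b' : V, a' ≠ x' → b' ≠ x' →
        ∃ w : (HG G s t u v).Walk (inl a') (inl b'), (inl x' : V ⊕ Bool) ∉ w.support := by
      intro a' b' h1 h2
      obtain ⟨g, hg⟩ := hGavoid x' a' b' h1 h2
      obtain ⟨W, hW⟩ := lift_exists (s := s) (t := t) huv g
      refine ⟨W, fun hm => ?_⟩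
      rcases hW _ hm with ⟨c', hc', he⟩ | ⟨he, -⟩
      · injection he with he'
        exact hg (he' ▸ hc')
      · simp at he
    have dock : ∀ y : V ⊕ Bool, y ≠ inl x' →
        ∃ (c : V) (d : (HG G s t u v).Walk y (inl c)), c ≠ x' ∧
          ∀ z ∈ d.support, z = y ∨ z = inl c := by
      rintro (a' | c) hy
      · refine ⟨a', Walk.nil, fun h => hy (by rw [h]), by simp⟩
      · rcases c with _ | _
        · by_cases hux : u = x'
          · exact ⟨v, Walk.cons adj_mv Walk.nil, fun h => huv.ne (hux.trans h.symm),
              by intro z hz; simpa using hz⟩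
          · exact ⟨u, Walk.cons adj_mu Walk.nil, hux, by intro z hz; simpa using hz⟩
        · by_cases hsx : s = x'
          · exact ⟨t, Walk.cons adj_zt Walk.nil, fun h => hst (hsx.trans h.symm),
              by intro z hz; simpa using hz⟩
          · exact ⟨s, Walk.cons adj_zs Walk.nil, hsx, by intro z hz; simpa using hz⟩
    obtain ⟨a', da, ha', hda⟩ := dock a hax
    obtain ⟨b', db, hb', hdb⟩ := dock b hbx
    obtain ⟨c0, hc0⟩ := core a' b' ha' hb'
    refine glue da db c0 ?_ hc0 ?_
    · intro hm
      rcases hda _ hm with h | h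
      · exact hax h.symm
      · injection h with h'
        exact ha' h'.symm
    · intro hm
      rcases hdb _ hm with h | h
      · exact hbx h.symm
      · injection h with h'
        exact hb' h'.symm
  · -- avoiding `inr c`
    have dock : ∀ y : V ⊕ Bool, y ≠ inr c →
        ∃ (c' : V) (d : (HG G s t u v).Walk y (inl c')),
          ∀ z ∈ d.support, z = y ∨ z = inl c' := by
      rintro (a' | cc) hy
      · exact ⟨a', Walk.nil, by simp⟩
      · rcases cc with _ | _
        · exact ⟨u, Walk.cons adj_mu Walk.nil, by intro z hz; simpa using hz⟩
        · exact ⟨s, Walk.cons adj_zs Walk.nil, by intro z hz; simpa using hz⟩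
    obtain ⟨a', da, hda⟩ := dock a hax
    obtain ⟨b', db, hdb⟩ := dock b hbx
    have hdock_avoid : ∀ (y : V ⊕ Bool) (c' : V) (d : (HG G s t u v).Walk y (inl c')),
        y ≠ inr c → (∀ z ∈ d.support, z = y ∨ z = inl c') → (inr c : V ⊕ Bool) ∉ d.support := by
      intro y c' d hy hd hm
      rcases hd _ hm with h | h
      · exact hy h.symm
      · simp at h
    rcases c with _ | _
    · -- avoiding the subdivision vertex `inr false`
      have core : ∃ w : (HG G s t u v).Walk (inl a') (inl b'), (inr false : V ⊕ Bool) ∉ w.support := by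
        obtain ⟨g, hg⟩ := no_uv_walk hcard hGavoid huv a' b'
        obtain ⟨W, hW⟩ := lift_exists (s := s) (t := t) huv g
        refine ⟨W, fun hm => ?_⟩
        rcases hW _ hm with ⟨c', hc', he⟩ | ⟨-, he⟩
        · simp at he
        · exact hg he
      obtain ⟨c0, hc0⟩ := core
      exact glue da db c0 (hdock_avoid _ _ _ hax hda) hc0 (hdock_avoid _ _ _ hbx hdb)
    · -- avoiding the apex vertex `inr true`
      have core : ∃ w : (HG G s t u v).Walk (inl a') (inl b'), (inr true : V ⊕ Bool) ∉ w.support := by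
        obtain ⟨g⟩ := hGconn.preconnected a' b'
        obtain ⟨W, hW⟩ := lift_exists (s := s) (t := t) huv g
        refine ⟨W, fun hm => ?_⟩
        rcases hW _ hm with ⟨c', hc', he⟩ | ⟨he, -⟩ <;> simp at he
      obtain ⟨c0, hc0⟩ := core
      exact glue da db c0 (hdock_avoid _ _ _ hax hda) hc0 (hdock_avoid _ _ _ hbx hdb)

end Hgraph

section Assemble

variable [DecidableEq V] {G : SimpleGraph V} {s t u v : V}

omit [DecidableEq V] in
lemma assemble (huv : G.Adj u v)
    (P0 : (HG G s t u v).Walk (inl s) (inr false))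
    (Q0 : (HG G s t u v).Walk (inl t) (inr false))
    (hP0 : P0.IsPath) (hQ0 : Q0.IsPath)
    (hP0z : (inr true : V ⊕ Bool) ∉ P0.support)
    (hQ0z : (inr true : V ⊕ Bool) ∉ Q0.support)
    (hdisj : ∀ y ∈ P0.support, y ∈ Q0.support → y = inr false) :
    ∃ p : G.Walk s t, p.IsPath ∧ s(u, v) ∈ p.edges := by
  classical
  obtain ⟨cA, hadjA, A1, hAeq⟩ := Walk.exists_eq_cons_of_ne (by simp) P0.reverse
  obtain ⟨cB, hadjB, B1, hBeq⟩ := Walk.exists_eq_cons_of_ne (by simp) Q0.reverse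
  have hArev : P0.reverse.IsPath := P0.isPath_reverse_iff.mpr hP0
  have hBrev : Q0.reverse.IsPath := Q0.isPath_reverse_iff.mpr hQ0
  rw [hAeq] at hArev
  rw [hBeq] at hBrev
  obtain ⟨hA1path, hmA1⟩ := (Walk.cons_isPath_iff _ _).mp hArev
  obtain ⟨hB1path, hmB1⟩ := (Walk.cons_isPath_iff _ _).mp hBrev
  have hA1sub : ∀ z ∈ A1.support, z ∈ P0.support := by
    intro z hz
    have : z ∈ P0.reverse.support := by
      rw [hAeq, Walk.support_cons]; exact List.mem_cons_of_mem _ hz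
    rwa [Walk.support_reverse, List.mem_reverse] at this
  have hB1sub : ∀ z ∈ B1.support, z ∈ Q0.support := by
    intro z hz
    have : z ∈ Q0.reverse.support := by
      rw [hBeq, Walk.support_cons]; exact List.mem_cons_of_mem _ hz
    rwa [Walk.support_reverse, List.mem_reverse] at this
  rcases cA with d1 | cc
  swap
  · exact absurd hadjA ((HG_adj_inr_inr G s t u v _ _).mp)
  rcases cB with d2 | cc
  swap
  · exact absurd hadjB ((HG_adj_inr_inr G s t u v _ _).mp)
  have hd1 : d1 = u ∨ d1 = v := by
    have := (HG_adj_inr_inl G s t u v d1 false).mp hadjA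
    simpa using this
  have hd2 : d2 = u ∨ d2 = v := by
    have := (HG_adj_inr_inl G s t u v d2 false).mp hadjB
    simpa using this
  have hA1P0 : (inl d1 : V ⊕ Bool) ∈ P0.support := hA1sub _ (Walk.start_mem_support _)
  have hB1Q0 : (inl d2 : V ⊕ Bool) ∈ Q0.support := hB1sub _ (Walk.start_mem_support _)
  have hd12 : d1 ≠ d2 := by
    rintro rfl
    have := hdisj _ hA1P0 hB1Q0
    simp at this
  obtain ⟨gA, hgA⟩ := down_exists A1
    (fun z hz => ⟨fun h => hmA1 (h ▸ hz), fun h => hP0z (h ▸ hA1sub _ hz)⟩) rfl rfl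
  obtain ⟨gB, hgB⟩ := down_exists B1
    (fun z hz => ⟨fun h => hmB1 (h ▸ hz), fun h => hQ0z (h ▸ hB1sub _ hz)⟩) rfl rfl
  have memA : ∀ y : V, y ∈ gA.support → (inl y : V ⊕ Bool) ∈ A1.support := by
    intro y hy
    rw [← hgA]
    exact List.mem_map_of_mem hy
  have memB : ∀ y : V, y ∈ gB.support → (inl y : V ⊕ Bool) ∈ B1.support := by
    intro y hy
    rw [← hgB]
    exact List.mem_map_of_mem hy
  have hgApath : gA.IsPath := by
    rw [Walk.isPath_def]
    exact List.Nodup.of_map inl (hgA ▸ hA1path.support_nodup)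
  have hgBpath : gB.IsPath := by
    rw [Walk.isPath_def]
    exact List.Nodup.of_map inl (hgB ▸ hB1path.support_nodup)
  have hadj12 : G.Adj d1 d2 := by
    rcases hd1 with rfl | rfl <;> rcases hd2 with rfl | rfl
    · exact absurd rfl hd12
    · exact huv
    · exact huv.symm
    · exact absurd rfl hd12
  have hsym : s(d1, d2) = s(u, v) := by
    rcases hd1 with rfl | rfl <;> rcases hd2 with rfl | rfl
    · exact absurd rfl hd12
    · rfl
    · exact Sym2.eq_swap
    · exact absurd rfl hd12
  have hd1B : d1 ∉ gB.support := by
    intro hmem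
    have h2 : (inl d1 : V ⊕ Bool) ∈ Q0.support := hB1sub _ (memB _ hmem)
    have := hdisj _ hA1P0 h2
    simp at this
  refine ⟨gA.reverse.append (Walk.cons hadj12 gB), ?_, ?_⟩
  · refine append_isPath (gA.isPath_reverse_iff.mpr hgApath) ?_ ?_
    · exact (Walk.cons_isPath_iff _ _).mpr ⟨hgBpath, hd1B⟩
    · intro y hy1 hy2
      rw [Walk.support_reverse, List.mem_reverse] at hy1
      rw [Walk.support_cons] at hy2
      rcases List.mem_cons.mp hy2 with rfl | hy2
      · rfl
      · have h1 : (inl y : V ⊕ Bool) ∈ P0.support := hA1sub _ (memA _ hy1)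
        have h2 : (inl y : V ⊕ Bool) ∈ Q0.support := hB1sub _ (memB _ hy2)
        have := hdisj _ h1 h2
        simp at this
  · rw [Walk.edges_append, List.mem_append, Walk.edges_cons]
    exact Or.inr (hsym ▸ List.mem_cons_self)

end Assemble

end TwoConnAux


/-- A graph is 2-connected (biconnected): it is connected, has at least 3
vertices, and deleting any single vertex leaves it connected. -/
def TwoConnected {V : Type*} [Fintype V] (G : SimpleGraph V) : Prop :=
  3 ≤ Fintype.card V ∧ G.Connected ∧
    ∀ x : V, (G.induce ({x}ᶜ : Set V)).Connected

/-- In a 2-connected graph, for any two vertices `s ≠ t` and any edge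
`(u,v)`, there is a simple path from `s` to `t` using the edge `(u,v)`. -/
theorem stmt6 {V : Type*} [Fintype V] [DecidableEq V]
    (G : SimpleGraph V) (h2c : TwoConnected G)
    (s t u v : V) (hst : s ≠ t) (huv : G.Adj u v) :
    ∃ p : G.Walk s t, p.IsPath ∧ s(u, v) ∈ p.edges := by
  classical
  open TwoConnAux Sum in
  obtain ⟨hcard, hGconn, hdel⟩ := h2c
  have hGavoid : AvoidConn G := fun x a b ha hb => avoid_walk (hdel x) ha hb
  have hcardH : 3 ≤ Fintype.card (V ⊕ Bool) := by
    rw [Fintype.card_sum]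
    omega
  have hH : AvoidConn (HG G s t u v) := hconnH hcard hGconn hGavoid hst huv
  obtain ⟨P, Q, hP, hQ, hQ2, hdisj⟩ :=
    lemA hcardH hH (show (inr true : V ⊕ Bool) ≠ inr false by simp)
  obtain ⟨cP, hadjP, P0, rfl⟩ := SimpleGraph.Walk.exists_eq_cons_of_ne (by simp) P
  obtain ⟨cQ, hadjQ, Q0, rfl⟩ := SimpleGraph.Walk.exists_eq_cons_of_ne (by simp) Q
  obtain ⟨hP0path, hzP0⟩ := (SimpleGraph.Walk.cons_isPath_iff _ _).mp hP
  obtain ⟨hQ0path, hzQ0⟩ := (SimpleGraph.Walk.cons_isPath_iff _ _).mp hQ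
  rcases cP with p1 | cc
  swap
  · exact absurd hadjP ((HG_adj_inr_inr G s t u v _ _).mp)
  rcases cQ with q1 | cc
  swap
  · exact absurd hadjQ ((HG_adj_inr_inr G s t u v _ _).mp)
  have hp1 : p1 = s ∨ p1 = t := by
    have := (HG_adj_inr_inl G s t u v p1 true).mp hadjP
    simpa using this
  have hq1 : q1 = s ∨ q1 = t := by
    have := (HG_adj_inr_inl G s t u v q1 true).mp hadjQ
    simpa using this
  have hmemP : (inl p1 : V ⊕ Bool) ∈ (SimpleGraph.Walk.cons hadjP P0).support := by
    rw [SimpleGraph.Walk.support_cons]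
    exact List.mem_cons_of_mem _ (SimpleGraph.Walk.start_mem_support _)
  have hmemQ : (inl q1 : V ⊕ Bool) ∈ (SimpleGraph.Walk.cons hadjQ Q0).support := by
    rw [SimpleGraph.Walk.support_cons]
    exact List.mem_cons_of_mem _ (SimpleGraph.Walk.start_mem_support _)
  have hne : p1 ≠ q1 := by
    rintro rfl
    have := hdisj _ hmemP hmemQ
    simp at this
  have hd0 : ∀ y ∈ P0.support, y ∈ Q0.support → y = inr false := by
    intro y hy1 hy2
    have h1 : y ∈ (SimpleGraph.Walk.cons hadjP P0).support := by
      rw [SimpleGraph.Walk.support_cons]; exact List.mem_cons_of_mem _ hy1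
    have h2 : y ∈ (SimpleGraph.Walk.cons hadjQ Q0).support := by
      rw [SimpleGraph.Walk.support_cons]; exact List.mem_cons_of_mem _ hy2
    rcases hdisj y h1 h2 with rfl | rfl
    · exact absurd hy1 hzP0
    · rfl
  rcases hp1 with rfl | rfl <;> rcases hq1 with rfl | rfl
  · exact absurd rfl hne
  · exact assemble huv P0 Q0 hP0path hQ0path hzP0 hzQ0 hd0
  · exact assemble huv Q0 P0 hQ0path hP0path hzQ0 hzP0 (fun y h1 h2 => hd0 y h2 h1)
  · exact absurd rfl hne
end

section
/- Adding a single edge to a series-parallel graph yields a planar graph; that is, if G has no K₄ minor, then G plus any one additional edge contains neither K₅ nor K₃,₃ as a minor. -/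
/-- A graph is planar (Kuratowski/Wagner) iff it has no `K₅` minor and no
`K₃,₃` minor. -/
def PlanarByMinors {V : Type*} (G : SimpleGraph V) : Prop :=
  ¬ HasMinorPattern G (⊤ : SimpleGraph (Fin 5)) ∧
  ¬ HasMinorPattern G (completeBipartiteGraph (Fin 3) (Fin 3))

section Helpers
open SimpleGraph
variable {V : Type*} {G : SimpleGraph V} {u v : V}

private lemma adj_sup_iff (huv : u ≠ v) {a b : V} :
    (G ⊔ SimpleGraph.fromEdgeSet {s(u, v)}).Adj a b ↔
      G.Adj a b ∨ (a = u ∧ b = v) ∨ (a = v ∧ b = u) := by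
  simp only [sup_adj, fromEdgeSet_adj, Set.mem_singleton_iff, Sym2.eq_iff]
  constructor
  · rintro (h | ⟨(⟨rfl,rfl⟩|⟨rfl,rfl⟩), h⟩) <;> tauto
  · rintro (h | ⟨rfl,rfl⟩ | ⟨rfl,rfl⟩) <;> simp [huv, huv.symm] <;> tauto

private lemma reach_aux (huv : u ≠ v) {S : Set V} (hu : u ∈ S) (hv : v ∈ S)
    {x y : ↥S} (p : ((G ⊔ SimpleGraph.fromEdgeSet {s(u, v)}).induce S).Walk x y) :
    (G.induce S).Reachable x y ∨
      ((G.induce S).Reachable x ⟨u, hu⟩ ∧ (G.induce S).Reachable ⟨v, hv⟩ y) ∨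
      ((G.induce S).Reachable x ⟨v, hv⟩ ∧ (G.induce S).Reachable ⟨u, hu⟩ y) := by
  induction p with
  | nil => exact Or.inl (Reachable.refl _)
  | @cons x z _ h p ih =>
    have h' : (G ⊔ SimpleGraph.fromEdgeSet {s(u, v)}).Adj ↑x ↑z := h
    rw [adj_sup_iff huv] at h'
    rcases h' with h' | ⟨hxu, hzv⟩ | ⟨hxv, hzu⟩
    · have hadj : (G.induce S).Adj x z := h'
      rcases ih with hr | ⟨h1, h2⟩ | ⟨h1, h2⟩
      · exact Or.inl (hadj.reachable.trans hr)
      · exact Or.inr (Or.inl ⟨hadj.reachable.trans h1, h2⟩)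
      · exact Or.inr (Or.inr ⟨hadj.reachable.trans h1, h2⟩)
    · have hx : x = ⟨u, hu⟩ := Subtype.ext hxu
      have hz : z = ⟨v, hv⟩ := Subtype.ext hzv
      subst hx; subst hz
      rcases ih with hr | ⟨h1, h2⟩ | ⟨h1, h2⟩
      · exact Or.inr (Or.inl ⟨Reachable.refl _, hr⟩)
      · exact Or.inr (Or.inl ⟨Reachable.refl _, h2⟩)
      · exact Or.inl h2
    · have hx : x = ⟨v, hv⟩ := Subtype.ext hxv
      have hz : z = ⟨u, hu⟩ := Subtype.ext hzu
      subst hx; subst hz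
      rcases ih with hr | ⟨h1, h2⟩ | ⟨h1, h2⟩
      · exact Or.inr (Or.inr ⟨Reachable.refl _, hr⟩)
      · exact Or.inl h2
      · exact Or.inr (Or.inr ⟨Reachable.refl _, h2⟩)

private lemma reach_or (huv : u ≠ v) {S : Set V} (hu : u ∈ S) (hv : v ∈ S)
    (hconn : ((G ⊔ SimpleGraph.fromEdgeSet {s(u, v)}).induce S).Connected) (x : ↥S) :
    (G.induce S).Reachable x ⟨u, hu⟩ ∨ (G.induce S).Reachable x ⟨v, hv⟩ := by
  obtain ⟨p⟩ := hconn x ⟨u, hu⟩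
  rcases reach_aux huv hu hv p with h | ⟨h1, _⟩ | ⟨h1, _⟩
  · exact Or.inl h
  · exact Or.inl h1
  · exact Or.inr h1

private lemma reachSet_connected {S : Set V} {w : V} (hw : w ∈ S) :
    (G.induce {x | ∃ h : x ∈ S, (G.induce S).Reachable ⟨x, h⟩ ⟨w, hw⟩}).Connected := by
  classical
  set A : Set V := {x | ∃ h : x ∈ S, (G.induce S).Reachable ⟨x, h⟩ ⟨w, hw⟩} with hA
  have hwA : w ∈ A := ⟨hw, Reachable.refl _⟩
  apply G.induce_connected_of_patches w hwA
  intro x hx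
  obtain ⟨hxS, hreach⟩ := hx
  obtain ⟨p⟩ := hreach
  set q : G.Walk x w := p.map (SimpleGraph.Embedding.induce S).toHom with hq
  have hsupp : ∀ y ∈ q.support, y ∈ A := by
    intro y hy
    rw [show q.support = (p.map (SimpleGraph.Embedding.induce S).toHom).support from rfl, SimpleGraph.Walk.support_map, List.mem_map] at hy
    obtain ⟨z, hz, rfl⟩ := hy
    exact ⟨z.2, Walk.reachable (p.dropUntil z hz)⟩
  exact ⟨{y | y ∈ q.support}, hsupp, q.end_mem_support, q.start_mem_support,
    (q.connected_induce_support) _ _⟩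

private lemma conn_transfer (huv : u ≠ v) {S : Set V} (hS : ¬ (u ∈ S ∧ v ∈ S))
    (h : ((G ⊔ SimpleGraph.fromEdgeSet {s(u, v)}).induce S).Connected) :
    (G.induce S).Connected := by
  have he : (G ⊔ SimpleGraph.fromEdgeSet {s(u, v)}).induce S = G.induce S := by
    ext ⟨x, hx⟩ ⟨y, hy⟩
    simp only [comap_adj, Function.Embedding.coe_subtype]
    rw [adj_sup_iff huv]
    constructor
    · rintro (h | ⟨rfl, rfl⟩ | ⟨rfl, rfl⟩)
      · exact h
      · exact absurd ⟨hx, hy⟩ hS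
      · exact absurd ⟨hy, hx⟩ hS
    · exact Or.inl
  rwa [he] at h

private lemma extract {W : Type*} (P : SimpleGraph W) (huv : u ≠ v)
    (h : HasMinorPattern (G ⊔ SimpleGraph.fromEdgeSet {s(u, v)}) P) :
    HasMinorPattern G P
    ∨ (∃ i j : W, i ≠ j ∧ ∃ B : W → Set V,
        (∀ k, (B k).Nonempty) ∧ (∀ k, (G.induce (B k)).Connected) ∧
        (Pairwise fun k l => Disjoint (B k) (B l)) ∧
        (∀ k l, P.Adj k l → s(k, l) ≠ s(i, j) →
          ∃ x ∈ B k, ∃ y ∈ B l, G.Adj x y))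
    ∨ (∃ i : W, ∃ B : W → Set V, ∃ C : Set V,
        (∀ k, (B k).Nonempty) ∧ C.Nonempty ∧
        (∀ k, (G.induce (B k)).Connected) ∧ (G.induce C).Connected ∧
        (Pairwise fun k l => Disjoint (B k) (B l)) ∧
        (∀ k, Disjoint (B k) C) ∧
        (∀ k l, P.Adj k l → k ≠ i → l ≠ i →
          ∃ x ∈ B k, ∃ y ∈ B l, G.Adj x y) ∧
        (∀ k, P.Adj k i →
          (∃ x ∈ B k, ∃ y ∈ B i, G.Adj x y) ∨ (∃ x ∈ B k, ∃ y ∈ C, G.Adj x y))) := by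
  classical
  obtain ⟨B, hN, hC, hD, hE⟩ := h
  have huniq : ∀ {x : V} {k l : W}, x ∈ B k → x ∈ B l → k = l := by
    intro x k l hk hl
    by_contra hkl
    exact (hD hkl).le_bot ⟨hk, hl⟩ |>.elim
  by_cases hsame : ∃ i, u ∈ B i ∧ v ∈ B i
  · obtain ⟨i, hui, hvi⟩ := hsame
    -- all cross witnesses are G-edges
    have hE' : ∀ k l, P.Adj k l → ∃ x ∈ B k, ∃ y ∈ B l, G.Adj x y := by
      intro k l hkl
      obtain ⟨x, hx, y, hy, hxy⟩ := hE k l hkl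
      rw [adj_sup_iff huv] at hxy
      rcases hxy with hxy | ⟨rfl, rfl⟩ | ⟨rfl, rfl⟩
      · exact ⟨x, hx, y, hy, hxy⟩
      · exact absurd ((huniq hx hui).trans (huniq hvi hy)) hkl.ne
      · exact absurd ((huniq hx hvi).trans (huniq hui hy)) hkl.ne
    have hCother : ∀ k, k ≠ i → (G.induce (B k)).Connected := by
      intro k hk
      refine conn_transfer huv (fun ⟨hu', _⟩ => hk (huniq hu' hui)) (hC k)
    by_cases hconn : (G.induce (B i)).Connected
    · refine Or.inl ⟨B, hN, ?_, hD, hE'⟩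
      intro k
      by_cases hk : k = i
      · subst hk; exact hconn
      · exact hCother k hk
    · -- split case
      right; right
      have hor := reach_or (G := G) huv hui hvi (hC i)
      have hnr : ¬ (G.induce (B i)).Reachable ⟨u, hui⟩ ⟨v, hvi⟩ := by
        intro hr
        apply hconn
        rw [connected_iff_exists_forall_reachable]
        refine ⟨⟨u, hui⟩, fun w => ?_⟩
        rcases hor w with h | h
        · exact h.symm
        · exact (h.trans hr.symm).symm
      set A : Set V := {x | ∃ h : x ∈ B i, (G.induce (B i)).Reachable ⟨x, h⟩ ⟨u, hui⟩} with hAdef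
      set C : Set V := {x | ∃ h : x ∈ B i, (G.induce (B i)).Reachable ⟨x, h⟩ ⟨v, hvi⟩} with hCdef
      have hAsub : A ⊆ B i := fun x hx => hx.1
      have hCsub : C ⊆ B i := fun x hx => hx.1
      have hAC : Disjoint A C := by
        rw [Set.disjoint_left]
        rintro x ⟨hx, hru⟩ ⟨hx', hrv⟩
        exact hnr (hru.symm.trans hrv)
      have hupd_i : ∀ (f : W → Set V), Function.update f i A i = A := fun f => Function.update_self i A f
      refine ⟨i, Function.update B i A, C, ?_, ⟨v, hvi, Reachable.refl _⟩, ?_, reachSet_connected hvi, ?_, ?_, ?_, ?_⟩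
      · intro k
        by_cases hk : k = i
        · subst hk; rw [Function.update_self]
          exact ⟨u, hui, Reachable.refl _⟩
        · rw [Function.update_of_ne hk]; exact hN k
      · intro k
        by_cases hk : k = i
        · subst hk; rw [Function.update_self]
          exact reachSet_connected hui
        · rw [Function.update_of_ne hk]; exact hCother k hk
      · intro k l hkl
        by_cases hk : k = i <;> by_cases hl : l = i
        · exact absurd (hk.trans hl.symm) hkl
        · subst hk; rw [Function.update_self, Function.update_of_ne hl]
          exact Set.disjoint_of_subset_left hAsub (hD hkl)
        · subst hl; rw [Function.update_self, Function.update_of_ne hk]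
          exact Set.disjoint_of_subset_right hAsub (hD hkl)
        · rw [Function.update_of_ne hk, Function.update_of_ne hl]
          exact hD hkl
      · intro k
        by_cases hk : k = i
        · subst hk; rw [Function.update_self]; exact hAC
        · rw [Function.update_of_ne hk]
          exact Set.disjoint_of_subset_right hCsub (hD hk)
      · intro k l hkl hk hl
        rw [Function.update_of_ne hk, Function.update_of_ne hl]
        exact hE' k l hkl
      · intro k hki
        obtain ⟨x, hx, y, hy, hxy⟩ := hE' k i hki
        rw [Function.update_of_ne hki.ne, Function.update_self]
        rcases reach_or (G := G) huv hui hvi (hC i) ⟨y, hy⟩ with h | h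
        · exact Or.inl ⟨x, hx, y, ⟨hy, h⟩, hxy⟩
        · exact Or.inr ⟨x, hx, y, ⟨hy, h⟩, hxy⟩
  · have hCall : ∀ k, (G.induce (B k)).Connected := by
      intro k
      exact conn_transfer huv (fun ⟨hu', hv'⟩ => hsame ⟨k, hu', hv'⟩) (hC k)
    by_cases hcross : ∃ i j, i ≠ j ∧ u ∈ B i ∧ v ∈ B j
    · obtain ⟨i, j, hij, hui, hvj⟩ := hcross
      refine Or.inr (Or.inl ⟨i, j, hij, B, hN, hCall, hD, ?_⟩)
      intro k l hkl hne
      obtain ⟨x, hx, y, hy, hxy⟩ := hE k l hkl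
      rw [adj_sup_iff huv] at hxy
      rcases hxy with hxy | ⟨rfl, rfl⟩ | ⟨rfl, rfl⟩
      · exact ⟨x, hx, y, hy, hxy⟩
      · exact absurd (by rw [huniq hx hui, huniq hy hvj]) hne
      · exact absurd (by rw [huniq hx hvj, huniq hy hui, Sym2.eq_swap]) hne
    · refine Or.inl ⟨B, hN, hCall, hD, ?_⟩
      intro k l hkl
      obtain ⟨x, hx, y, hy, hxy⟩ := hE k l hkl
      rw [adj_sup_iff huv] at hxy
      rcases hxy with hxy | ⟨rfl, rfl⟩ | ⟨rfl, rfl⟩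
      · exact ⟨x, hx, y, hy, hxy⟩
      · exact absurd ⟨k, l, hkl.ne, hx, hy⟩ hcross
      · exact absurd ⟨l, k, hkl.ne.symm, hy, hx⟩ hcross

end Helpers

section Helpers2
open SimpleGraph
variable {V : Type*} {G : SimpleGraph V}
private lemma eflip {S T : Set V} (h : ∃ p ∈ S, ∃ q ∈ T, G.Adj p q) :
    ∃ p ∈ T, ∃ q ∈ S, G.Adj p q := by
  obtain ⟨p, hp, q, hq, h⟩ := h
  exact ⟨q, hq, p, hp, h.symm⟩

private lemma econn {S T : Set V} (hS : (G.induce S).Connected)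
    (hT : (G.induce T).Connected) (h : ∃ p ∈ S, ∃ q ∈ T, G.Adj p q) :
    (G.induce (S ∪ T)).Connected := by
  obtain ⟨p, hp, q, hq, h⟩ := h
  exact SimpleGraph.connected_induce_union hS.preconnected hT.preconnected hp hq h

private lemma eunion_left {S T U : Set V} (h : ∃ p ∈ S, ∃ q ∈ U, G.Adj p q) :
    ∃ p ∈ S ∪ T, ∃ q ∈ U, G.Adj p q := by
  obtain ⟨p, hp, q, hq, h⟩ := h
  exact ⟨p, Or.inl hp, q, hq, h⟩

private lemma eunion_right {S T U : Set V} (h : ∃ p ∈ T, ∃ q ∈ U, G.Adj p q) :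
    ∃ p ∈ S ∪ T, ∃ q ∈ U, G.Adj p q := by
  obtain ⟨p, hp, q, hq, h⟩ := h
  exact ⟨p, Or.inr hp, q, hq, h⟩

private lemma k4_model (S0 S1 S2 S3 : Set V)
    (n0 : S0.Nonempty) (n1 : S1.Nonempty) (n2 : S2.Nonempty) (n3 : S3.Nonempty)
    (c0 : (G.induce S0).Connected) (c1 : (G.induce S1).Connected)
    (c2 : (G.induce S2).Connected) (c3 : (G.induce S3).Connected)
    (d01 : Disjoint S0 S1) (d02 : Disjoint S0 S2) (d03 : Disjoint S0 S3)
    (d12 : Disjoint S1 S2) (d13 : Disjoint S1 S3) (d23 : Disjoint S2 S3)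
    (e01 : ∃ p ∈ S0, ∃ q ∈ S1, G.Adj p q) (e02 : ∃ p ∈ S0, ∃ q ∈ S2, G.Adj p q)
    (e03 : ∃ p ∈ S0, ∃ q ∈ S3, G.Adj p q) (e12 : ∃ p ∈ S1, ∃ q ∈ S2, G.Adj p q)
    (e13 : ∃ p ∈ S1, ∃ q ∈ S3, G.Adj p q) (e23 : ∃ p ∈ S2, ∃ q ∈ S3, G.Adj p q) :
    HasMinorPattern G (⊤ : SimpleGraph (Fin 4)) := by
  refine ⟨![S0, S1, S2, S3], ?_, ?_, ?_, ?_⟩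
  · intro k; fin_cases k <;> assumption
  · intro k; fin_cases k <;> assumption
  · intro k l hkl
    fin_cases k <;> fin_cases l <;>
      first
        | exact absurd rfl hkl
        | assumption
        | solve_by_elim [Disjoint.symm]
  · intro k l hkl
    fin_cases k <;> fin_cases l <;>
      first
        | exact absurd rfl (by simpa using hkl)
        | assumption
        | solve_by_elim [eflip]

private lemma fin3_facts (c : Fin 3) : c + 1 ≠ c ∧ c + 2 ≠ c ∧ c + 1 ≠ c + 2 := by
  revert c; decide

/-- `K₃,₃` minus (at most) the edge `a–b` still yields a `K₄` minor. -/
private lemma k4_of_k33_minus (a b : Fin 3) (L R : Fin 3 → Set V)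
    (hLN : ∀ x, (L x).Nonempty) (hRN : ∀ y, (R y).Nonempty)
    (hLC : ∀ x, (G.induce (L x)).Connected) (hRC : ∀ y, (G.induce (R y)).Connected)
    (hLD : Pairwise fun x y => Disjoint (L x) (L y))
    (hRD : Pairwise fun x y => Disjoint (R x) (R y))
    (hLR : ∀ x y, Disjoint (L x) (R y))
    (hE : ∀ x y, ¬(x = a ∧ y = b) → ∃ p ∈ L x, ∃ q ∈ R y, G.Adj p q) :
    HasMinorPattern G (⊤ : SimpleGraph (Fin 4)) := by
  obtain ⟨ha1, ha2, ha12⟩ := fin3_facts a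
  obtain ⟨hb1, hb2, hb12⟩ := fin3_facts b
  have E : ∀ x y : Fin 3, ¬(x = a ∧ y = b) → ∃ p ∈ L x, ∃ q ∈ R y, G.Adj p q := hE
  refine k4_model (L a ∪ R (b+1)) (L (a+1) ∪ R b) (L (a+2)) (R (b+2))
    ((hLN a).inl) ((hLN (a+1)).inl) (hLN (a+2)) (hRN (b+2))
    (econn (hLC a) (hRC (b+1)) (E a (b+1) (fun h => hb1 h.2)))
    (econn (hLC (a+1)) (hRC b) (E (a+1) b (fun h => ha1 h.1)))
    (hLC (a+2)) (hRC (b+2))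
    ?_ ?_ ?_ ?_ ?_ ?_ ?_ ?_ ?_ ?_ ?_ ?_
  · simp only [Set.disjoint_union_left, Set.disjoint_union_right]
    exact ⟨⟨hLD ha1.symm, (hLR (a+1) (b+1)).symm⟩, ⟨hLR a b, hRD hb1⟩⟩
  · simp only [Set.disjoint_union_left]
    exact ⟨hLD ha2.symm, (hLR (a+2) (b+1)).symm⟩
  · simp only [Set.disjoint_union_left]
    exact ⟨hLR a (b+2), hRD hb12⟩
  · simp only [Set.disjoint_union_left]
    exact ⟨hLD ha12, (hLR (a+2) b).symm⟩
  · simp only [Set.disjoint_union_left]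
    exact ⟨hLR (a+1) (b+2), hRD hb2.symm⟩
  · exact hLR (a+2) (b+2)
  · -- S0 - S1 : edge L(a+1) – R(b+1)
    exact eunion_right (eflip (eunion_left (E (a+1) (b+1) (fun h => ha1 h.1))))
  · -- S0 - S2 : edge L(a+2) – R(b+1)
    exact eunion_right (eflip (E (a+2) (b+1) (fun h => ha2 h.1)))
  · -- S0 - S3 : edge L a – R(b+2)
    exact eunion_left (E a (b+2) (fun h => hb2 h.2))
  · -- S1 - S2 : edge L(a+2) – R b
    exact eunion_right (eflip (E (a+2) b (fun h => ha2 h.1)))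
  · -- S1 - S3 : edge L(a+1) – R(b+2)
    exact eunion_left (E (a+1) (b+2) (fun h => ha1 h.1))
  · -- S2 - S3 : edge L(a+2) – R(b+2)
    exact E (a+2) (b+2) (fun h => ha2 h.1)

/-- `K₃,₃` with the right-vertex `b` split into two (non-adjacent) connected
pieces `R b` and `C` still yields a `K₄` minor. -/
private lemma k4_of_k33_split (b : Fin 3) (L R : Fin 3 → Set V) (C : Set V)
    (hLN : ∀ x, (L x).Nonempty) (hRN : ∀ y, (R y).Nonempty)
    (hLC : ∀ x, (G.induce (L x)).Connected) (hRC : ∀ y, (G.induce (R y)).Connected)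
    (hCc : (G.induce C).Connected)
    (hLD : Pairwise fun x y => Disjoint (L x) (L y))
    (hRD : Pairwise fun x y => Disjoint (R x) (R y))
    (hLRd : ∀ x y, Disjoint (L x) (R y))
    (hLCd : ∀ x, Disjoint (L x) C)
    (hRCd : ∀ y, Disjoint (R y) C)
    (hE : ∀ x y, y ≠ b → ∃ p ∈ L x, ∃ q ∈ R y, G.Adj p q)
    (hEb : ∀ x, (∃ p ∈ L x, ∃ q ∈ R b, G.Adj p q) ∨ (∃ p ∈ L x, ∃ q ∈ C, G.Adj p q)) :
    HasMinorPattern G (⊤ : SimpleGraph (Fin 4)) := by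
  obtain ⟨hb1, hb2, hb12⟩ := fin3_facts b
  have core : ∀ (x y z : Fin 3) (Rs : Set V), x ≠ y → x ≠ z → y ≠ z →
      (G.induce Rs).Connected →
      (∀ w, Disjoint (L w) Rs) → Disjoint (R (b+1)) Rs → Disjoint (R (b+2)) Rs →
      (∃ p ∈ L y, ∃ q ∈ Rs, G.Adj p q) → (∃ p ∈ L z, ∃ q ∈ Rs, G.Adj p q) →
      HasMinorPattern G (⊤ : SimpleGraph (Fin 4)) := by
    intro x y z Rs hxy hxz hyz hRsC hLRs hR1Rs hR2Rs hy hz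
    refine k4_model (L x ∪ R (b+1)) (L y ∪ Rs) (L z) (R (b+2))
      ((hLN x).inl) ((hLN y).inl) (hLN z) (hRN (b+2))
      (econn (hLC x) (hRC (b+1)) (hE x (b+1) hb1))
      (econn (hLC y) hRsC hy)
      (hLC z) (hRC (b+2))
      ?_ ?_ ?_ ?_ ?_ ?_ ?_ ?_ ?_ ?_ ?_ ?_
    · simp only [Set.disjoint_union_left, Set.disjoint_union_right]
      exact ⟨⟨hLD hxy, (hLRd y (b+1)).symm⟩, ⟨hLRs x, hR1Rs⟩⟩
    · simp only [Set.disjoint_union_left]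
      exact ⟨hLD hxz, (hLRd z (b+1)).symm⟩
    · simp only [Set.disjoint_union_left]
      exact ⟨hLRd x (b+2), hRD hb12⟩
    · simp only [Set.disjoint_union_left]
      exact ⟨hLD hyz, (hLRs z).symm⟩
    · simp only [Set.disjoint_union_left]
      exact ⟨hLRd y (b+2), hR2Rs.symm⟩
    · exact hLRd z (b+2)
    · exact eunion_right (eflip (eunion_left (hE y (b+1) hb1)))
    · exact eunion_right (eflip (hE z (b+1) hb1))
    · exact eunion_left (hE x (b+2) hb2)
    · exact eunion_right (eflip hz)
    · exact eunion_left (hE y (b+2) hb2)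
    · exact hE z (b+2) hb2
  rcases hEb 0 with h0 | h0 <;> rcases hEb 1 with h1 | h1 <;> rcases hEb 2 with h2 | h2
  · exact core 2 0 1 (R b) (by decide) (by decide) (by decide) (hRC b)
      (fun w => hLRd w b) (hRD hb1) (hRD hb2) h0 h1
  · exact core 2 0 1 (R b) (by decide) (by decide) (by decide) (hRC b)
      (fun w => hLRd w b) (hRD hb1) (hRD hb2) h0 h1
  · exact core 1 0 2 (R b) (by decide) (by decide) (by decide) (hRC b)
      (fun w => hLRd w b) (hRD hb1) (hRD hb2) h0 h2
  · exact core 0 1 2 C (by decide) (by decide) (by decide) hCc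
      (fun w => hLCd w) (hRCd (b+1)) (hRCd (b+2)) h1 h2
  · exact core 0 1 2 (R b) (by decide) (by decide) (by decide) (hRC b)
      (fun w => hLRd w b) (hRD hb1) (hRD hb2) h1 h2
  · exact core 1 0 2 C (by decide) (by decide) (by decide) hCc
      (fun w => hLCd w) (hRCd (b+1)) (hRCd (b+2)) h0 h2
  · exact core 2 0 1 C (by decide) (by decide) (by decide) hCc
      (fun w => hLCd w) (hRCd (b+1)) (hRCd (b+2)) h0 h1
  · exact core 2 0 1 C (by decide) (by decide) (by decide) hCc
      (fun w => hLCd w) (hRCd (b+1)) (hRCd (b+2)) h0 h1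

end Helpers2

/-- Adding any single edge to a series-parallel graph yields a planar graph:
the result has neither a `K₅` minor nor a `K₃,₃` minor. -/
theorem stmt8 {V : Type*} (G : SimpleGraph V) (hsp : SeriesParallel G)
    (u v : V) (huv : u ≠ v) :
    PlanarByMinors (G ⊔ SimpleGraph.fromEdgeSet {s(u, v)}) := by
  classical
  constructor
  · -- no K₅ minor
    intro h
    rcases extract (⊤ : SimpleGraph (Fin 5)) huv h with
      ⟨B, hN, hC, hD, hE⟩ | ⟨i, j, hij, B, hN, hC, hD, hE⟩ |
      ⟨i, B, C, hN, hCn, hC, hCc, hD, hCd, hE, hEb⟩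
    · refine hsp ⟨fun a => B a.castSucc, fun a => hN _, fun a => hC _, ?_, ?_⟩
      · intro a b hab
        exact hD (fun hh => hab (Fin.castSucc_injective _ hh))
      · intro a b hab
        exact hE _ _ (by simpa using fun hh => hab.ne (Fin.castSucc_injective _ hh))
    · refine hsp ⟨fun a => B (i.succAbove a), fun a => hN _, fun a => hC _, ?_, ?_⟩
      · intro a b hab
        exact hD (fun hh => hab (Fin.succAbove_right_injective hh))
      · intro a b hab
        refine hE _ _ (by simpa using fun hh => hab.ne (Fin.succAbove_right_injective (p := i) hh)) ?_
        intro heq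
        rcases Sym2.eq_iff.1 heq with ⟨h1, _⟩ | ⟨_, h1⟩
        · exact Fin.succAbove_ne i a h1
        · exact Fin.succAbove_ne i b h1
    · refine hsp ⟨fun a => B (i.succAbove a), fun a => hN _, fun a => hC _, ?_, ?_⟩
      · intro a b hab
        exact hD (fun hh => hab (Fin.succAbove_right_injective hh))
      · intro a b hab
        exact hE _ _ (by simpa using fun hh => hab.ne (Fin.succAbove_right_injective (p := i) hh))
          (Fin.succAbove_ne i a) (Fin.succAbove_ne i b)
  · -- no K₃,₃ minor
    intro h
    have hadjLR : ∀ x y : Fin 3,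
        (completeBipartiteGraph (Fin 3) (Fin 3)).Adj (Sum.inl x) (Sum.inr y) := by
      simp
    rcases extract (completeBipartiteGraph (Fin 3) (Fin 3)) huv h with
      ⟨B, hN, hC, hD, hE⟩ | ⟨i, j, hij, B, hN, hC, hD, hE⟩ |
      ⟨i, B, C, hN, hCn, hC, hCc, hD, hCd, hE, hEb⟩
    · refine hsp (k4_of_k33_minus 0 0 (fun x => B (Sum.inl x)) (fun y => B (Sum.inr y))
        (fun x => hN _) (fun y => hN _) (fun x => hC _) (fun y => hC _)
        ?_ ?_ ?_ ?_)
      · intro x y hxy; exact hD (fun hh => hxy (Sum.inl_injective hh))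
      · intro x y hxy; exact hD (fun hh => hxy (Sum.inr_injective hh))
      · intro x y; exact hD (by simp)
      · intro x y _; exact hE _ _ (hadjLR x y)
    · -- one (possibly) missing edge s(i,j)
      have key : ∀ a b : Fin 3, (∀ (x y : Fin 3), s(Sum.inl x, Sum.inr y) ≠
            (s(Sum.inl a, Sum.inr b) : Sym2 (Fin 3 ⊕ Fin 3)) ∨ (x = a ∧ y = b) → False) → True := fun _ _ _ => trivial
      clear key
      have build : ∀ a b : Fin 3,
          (∀ x y : Fin 3, ¬(x = a ∧ y = b) →
            ∃ p ∈ B (Sum.inl x), ∃ q ∈ B (Sum.inr y), G.Adj p q) →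
          False := by
        intro a b hE'
        exact hsp (k4_of_k33_minus a b (fun x => B (Sum.inl x)) (fun y => B (Sum.inr y))
          (fun x => hN _) (fun y => hN _) (fun x => hC _) (fun y => hC _)
          (fun x y hxy => hD (fun hh => hxy (Sum.inl_injective hh)))
          (fun x y hxy => hD (fun hh => hxy (Sum.inr_injective hh)))
          (fun x y => hD (by simp)) hE')
      rcases i with a | b' <;> rcases j with a' | b
      · refine build 0 0 ?_
        intro x y _
        refine hE _ _ (hadjLR x y) ?_
        intro heq
        rcases Sym2.eq_iff.1 heq with ⟨_, h1⟩ | ⟨_, h1⟩ <;> simp at h1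
      · refine build a b ?_
        intro x y hxy
        refine hE _ _ (hadjLR x y) ?_
        intro heq
        rcases Sym2.eq_iff.1 heq with ⟨h1, h2⟩ | ⟨h1, _⟩
        · exact hxy ⟨Sum.inl_injective h1, Sum.inr_injective h2⟩
        · simp at h1
      · refine build a' b' ?_
        intro x y hxy
        refine hE _ _ (hadjLR x y) ?_
        intro heq
        rcases Sym2.eq_iff.1 (heq.trans Sym2.eq_swap) with ⟨h1, h2⟩ | ⟨h1, _⟩
        · exact hxy ⟨Sum.inl_injective h1, Sum.inr_injective h2⟩
        · simp at h1
      · refine build 0 0 ?_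
        intro x y _
        refine hE _ _ (hadjLR x y) ?_
        intro heq
        rcases Sym2.eq_iff.1 heq with ⟨h1, _⟩ | ⟨h1, _⟩ <;> simp at h1
    · -- split vertex i
      rcases i with a | b
      · refine hsp (k4_of_k33_split a (fun x => B (Sum.inr x)) (fun y => B (Sum.inl y)) C
          (fun x => hN _) (fun y => hN _) (fun x => hC _) (fun y => hC _) hCc
          (fun x y hxy => hD (fun hh => hxy (Sum.inr_injective hh)))
          (fun x y hxy => hD (fun hh => hxy (Sum.inl_injective hh)))
          (fun x y => hD (by simp))
          (fun x => hCd _) (fun y => hCd _) ?_ ?_)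
        · intro x y hya
          exact eflip (hE (Sum.inl y) (Sum.inr x) (hadjLR y x)
            (fun hh => hya (Sum.inl_injective hh)) (by simp))
        · intro x
          exact hEb (Sum.inr x) (by simp)
      · refine hsp (k4_of_k33_split b (fun x => B (Sum.inl x)) (fun y => B (Sum.inr y)) C
          (fun x => hN _) (fun y => hN _) (fun x => hC _) (fun y => hC _) hCc
          (fun x y hxy => hD (fun hh => hxy (Sum.inl_injective hh)))
          (fun x y hxy => hD (fun hh => hxy (Sum.inr_injective hh)))
          (fun x y => hD (by simp))
          (fun x => hCd _) (fun y => hCd _) ?_ ?_)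
        · intro x y hyb
          exact hE (Sum.inl x) (Sum.inr y) (hadjLR x y) (by simp)
            (fun hh => hyb (Sum.inr_injective hh))
        · intro x
          exact hEb (Sum.inl x) (hadjLR x b)
end

section
/- Pushing a demand preserves the cut condition locally: in a multiflow instance satisfying the cut condition, if every path used by some fractional solution to route a demand d=(u,v) passes through a common vertex w, then every cut separating {u,v} from w has surplus at least 2; consequently replacing one unit of demand d by unit demands (u,w) and (w,v) keeps the cut condition. -/
open Finset

/-- `cutSurplus c D X` : total capacity minus total demand crossing `δ(X)`. -/
def cutSurplus {V : Type*} [Fintype V] [DecidableEq V] (c D : V → V → ℝ)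
    (X : Finset V) : ℝ :=
  ∑ x ∈ X, ∑ y ∈ Xᶜ, (c x y - D x y)

section Aux

variable {V : Type*} [Fintype V] [DecidableEq V] {G : SimpleGraph V}

set_option linter.unusedSectionVars false

/-- The number (as a real) of ordered pairs `(a,b)` with `a ∈ C`, `b ∉ C`, such that
`s(a,b)` is an edge of the walk `W`. -/
noncomputable def crossInd (C : Finset V) {x y : V} (W : G.Walk x y) : ℝ :=
  ∑ a ∈ C, ∑ b ∈ Cᶜ, if s(a, b) ∈ W.edges then (1 : ℝ) else 0

lemma crossInd_nonneg (C : Finset V) {x y : V} (W : G.Walk x y) : 0 ≤ crossInd C W := by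
  refine Finset.sum_nonneg fun a _ => Finset.sum_nonneg fun b _ => ?_
  split <;> norm_num

lemma aux_cross_dir (C : Finset V) : ∀ {a b : V} (W : G.Walk a b), a ∈ C → b ∉ C →
    ∃ x y, x ∈ C ∧ y ∉ C ∧ s(x, y) ∈ W.edges := by
  intro a b W
  induction W with
  | nil => intro h1 h2; exact absurd h1 h2
  | @cons a m b hadj W ih =>
    intro ha hb
    by_cases hm : m ∈ C
    · obtain ⟨x, y, hx, hy, he⟩ := ih hm hb
      exact ⟨x, y, hx, hy, by rw [SimpleGraph.Walk.edges_cons]; exact List.mem_cons_of_mem _ he⟩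
    · exact ⟨a, m, ha, hm, by rw [SimpleGraph.Walk.edges_cons]; exact List.mem_cons_self⟩

lemma aux_cross (C : Finset V) {a b : V} (W : G.Walk a b)
    (h : (a ∈ C ∧ b ∉ C) ∨ (b ∈ C ∧ a ∉ C)) :
    ∃ x y, x ∈ C ∧ y ∉ C ∧ s(x, y) ∈ W.edges := by
  rcases h with ⟨ha, hb⟩ | ⟨hb, ha⟩
  · exact aux_cross_dir C W ha hb
  · obtain ⟨x, y, hx, hy, he⟩ := aux_cross_dir C W.reverse hb ha
    rw [SimpleGraph.Walk.edges_reverse, List.mem_reverse] at he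
    exact ⟨x, y, hx, hy, he⟩

lemma aux_one_cross (C : Finset V) {a b : V} (W : G.Walk a b)
    (h : (a ∈ C ∧ b ∉ C) ∨ (b ∈ C ∧ a ∉ C)) :
    1 ≤ crossInd C W := by
  obtain ⟨x0, y0, hx0, hy0, he⟩ := aux_cross C W h
  have h1 : (1 : ℝ) ≤ ∑ y ∈ Cᶜ, (if s(x0, y) ∈ W.edges then (1 : ℝ) else 0) := by
    have := Finset.single_le_sum (f := fun y => if s(x0, y) ∈ W.edges then (1 : ℝ) else 0)
      (fun i _ => by split <;> norm_num) (Finset.mem_compl.2 hy0)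
    simpa [he] using this
  refine h1.trans ?_
  exact Finset.single_le_sum
    (f := fun x => ∑ y ∈ Cᶜ, (if s(x, y) ∈ W.edges then (1 : ℝ) else 0))
    (fun i _ => Finset.sum_nonneg fun j _ => by split <;> norm_num) hx0

lemma aux_two_cross (C : Finset V) {a b w : V} (W : G.Walk a b) (hnd : W.edges.Nodup)
    (hw : w ∈ W.support)
    (h1 : (a ∈ C ∧ w ∉ C) ∨ (w ∈ C ∧ a ∉ C))
    (h2 : (w ∈ C ∧ b ∉ C) ∨ (b ∈ C ∧ w ∉ C)) :
    2 ≤ crossInd C W := by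
  have hsp : (W.takeUntil w hw).append (W.dropUntil w hw) = W := W.take_spec hw
  have hedges : W.edges = (W.takeUntil w hw).edges ++ (W.dropUntil w hw).edges := by
    conv_lhs => rw [← hsp]
    rw [SimpleGraph.Walk.edges_append]
  have hdisj : (W.takeUntil w hw).edges.Disjoint (W.dropUntil w hw).edges := by
    have := hnd; rw [hedges] at this
    exact fun x hx1 hx2 => (List.nodup_append.1 this).2.2 x hx1 x hx2 rfl
  obtain ⟨x1, y1, hx1, hy1, he1⟩ := aux_cross C (W.takeUntil w hw) h1
  obtain ⟨x2, y2, hx2, hy2, he2⟩ := aux_cross C (W.dropUntil w hw) h2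
  have hne : (x1, y1) ≠ (x2, y2) := by
    intro h
    rw [Prod.mk.injEq] at h
    obtain ⟨h1', h2'⟩ := h
    subst h1'; subst h2'
    exact hdisj he1 he2
  have hsub : ({(x1, y1), (x2, y2)} : Finset (V × V)) ⊆ C ×ˢ Cᶜ := by
    intro q hq
    rcases Finset.mem_insert.1 hq with h | h
    · subst h; exact Finset.mem_product.2 ⟨hx1, Finset.mem_compl.2 hy1⟩
    · rw [Finset.mem_singleton] at h; subst h
      exact Finset.mem_product.2 ⟨hx2, Finset.mem_compl.2 hy2⟩
  have hval : ∑ q ∈ ({(x1, y1), (x2, y2)} : Finset (V × V)),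
      (if s(q.1, q.2) ∈ W.edges then (1 : ℝ) else 0) = 2 := by
    rw [Finset.sum_pair hne]
    rw [if_pos (by rw [hedges]; exact List.mem_append_left _ he1),
        if_pos (by rw [hedges]; exact List.mem_append_right _ he2)]
    norm_num
  have hrw : crossInd C W = ∑ q ∈ C ×ˢ Cᶜ, (if s(q.1, q.2) ∈ W.edges then (1 : ℝ) else 0) := by
    rw [Finset.sum_product]
    rfl
  rw [hrw, ← hval]
  exact Finset.sum_le_sum_of_subset_of_nonneg hsub (fun q _ _ => by split <;> norm_num)

lemma sum_swap3 {α β γ : Type*} {M : Type*} [AddCommMonoid M]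
    (s : Finset α) (t : Finset β) (r : Finset γ) (g : α → β → γ → M) :
    ∑ i ∈ s, ∑ a ∈ t, ∑ b ∈ r, g i a b = ∑ a ∈ t, ∑ b ∈ r, ∑ i ∈ s, g i a b := by
  rw [Finset.sum_comm]
  exact Finset.sum_congr rfl fun a _ => Finset.sum_comm

lemma aux_ind_sum (C : Finset V) (a b : V) :
    (∑ x ∈ C, ∑ y ∈ Cᶜ, (if s(x, y) = s(a, b) then (1 : ℝ) else 0))
      = if (a ∈ C ∧ b ∉ C) ∨ (b ∈ C ∧ a ∉ C) then 1 else 0 := by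
  rw [← Finset.sum_product']
  by_cases hab : (a ∈ C ∧ b ∉ C) ∨ (b ∈ C ∧ a ∉ C)
  · rw [if_pos hab]
    rcases hab with ⟨ha, hb⟩ | ⟨hb, ha⟩
    · rw [Finset.sum_eq_single (a, b)]
      · simp
      · rintro ⟨qa, qb⟩ hq hne
        rw [if_neg]
        intro hs
        rcases Sym2.eq_iff.1 hs with ⟨h1, h2⟩ | ⟨h1, h2⟩
        · exact hne (Prod.ext h1 h2)
        · obtain ⟨hq1, hq2⟩ := Finset.mem_product.1 hq
          exact hb (h1 ▸ hq1)
      · intro h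
        exact absurd (Finset.mem_product.2 ⟨ha, Finset.mem_compl.2 hb⟩) h
    · rw [Finset.sum_eq_single (b, a)]
      · simp [Sym2.eq_swap]
      · rintro ⟨qa, qb⟩ hq hne
        rw [if_neg]
        intro hs
        rcases Sym2.eq_iff.1 hs with ⟨h1, h2⟩ | ⟨h1, h2⟩
        · obtain ⟨hq1, hq2⟩ := Finset.mem_product.1 hq
          exact ha (h1 ▸ hq1)
        · exact hne (Prod.ext h1 h2)
      · intro h
        exact absurd (Finset.mem_product.2 ⟨hb, Finset.mem_compl.2 ha⟩) h
  · rw [if_neg hab]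
    apply Finset.sum_eq_zero
    rintro ⟨qa, qb⟩ hq
    obtain ⟨hq1, hq2⟩ := Finset.mem_product.1 hq
    rw [Finset.mem_compl] at hq2
    rw [if_neg]
    intro hs
    rcases Sym2.eq_iff.1 hs with ⟨h1, h2⟩ | ⟨h1, h2⟩
    · exact hab (Or.inl ⟨h1 ▸ hq1, h2 ▸ hq2⟩)
    · exact hab (Or.inr ⟨h1 ▸ hq1, h2 ▸ hq2⟩)

lemma two_cell {s : Finset V} {u v : V} (hu : u ∈ s) (hv : v ∈ s) (huv : u ≠ v)
    (g : V → V → ℝ) (hg : ∀ a b, 0 ≤ g a b) :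
    g u v + g v u ≤ ∑ a ∈ s, ∑ b ∈ s, g a b := by
  have h1 : ∑ a ∈ ({u, v} : Finset V), ∑ b ∈ s, g a b ≤ ∑ a ∈ s, ∑ b ∈ s, g a b := by
    refine Finset.sum_le_sum_of_subset_of_nonneg ?_
      (fun i _ _ => Finset.sum_nonneg fun j _ => hg i j)
    intro x hx
    rcases Finset.mem_insert.1 hx with h | h
    · exact h ▸ hu
    · rw [Finset.mem_singleton] at h; exact h ▸ hv
  rw [Finset.sum_pair huv] at h1
  have h2 : g u v ≤ ∑ b ∈ s, g u b := Finset.single_le_sum (fun i _ => hg u i) hv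
  have h3 : g v u ≤ ∑ b ∈ s, g v b := Finset.single_le_sum (fun i _ => hg v i) hu
  linarith

end Aux

/-- Pushing a unit of the demand `d = (u,v)` to `w` preserves the cut
condition: if a fractional solution routes all demands and every path it
uses for `d` passes through `w`, then every cut separating `{u,v}` from `w`
has surplus at least `2`; consequently, decreasing the demand `(u,v)` by one
unit and adding unit demands `(u,w)` and `(w,v)` keeps the cut condition. -/
theorem stmt13 {V : Type*} [Fintype V] [DecidableEq V]
    (G : SimpleGraph V) [DecidableRel G.Adj]
    (c D : V → V → ℝ)
    (hc : ∀ x y, c x y = c y x) (hD : ∀ x y, D x y = D y x)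
    (hc0 : ∀ x y, 0 ≤ c x y) (hD0 : ∀ x y, 0 ≤ D x y)
    (hcut : ∀ C : Finset V, 0 ≤ cutSurplus c D C)
    (u v w : V) (huv : u ≠ v) (hDuv : 1 ≤ D u v)
    -- a fractional solution `f` :
    (f : ∀ a b : V, G.Path a b → ℝ)
    (hf0 : ∀ a b p, 0 ≤ f a b p)
    (hfeas : ∀ a b : V, G.Adj a b →
      (∑ x : V, ∑ y : V, ∑ p : G.Path x y,
        if s(a, b) ∈ (p : G.Walk x y).edges then f x y p else 0) ≤ c a b)
    (hsat : ∀ a b : V, a ≠ b →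
      D a b ≤ (∑ p : G.Path a b, f a b p) + (∑ p : G.Path b a, f b a p))
    -- every path used to route the demand `(u,v)` passes through `w` :
    (hthrough : ∀ p : G.Path u v, f u v p ≠ 0 → w ∈ (p : G.Walk u v).support)
    (hthrough' : ∀ p : G.Path v u, f v u p ≠ 0 → w ∈ (p : G.Walk v u).support) :
    (∀ C : Finset V,
      ((w ∈ C ∧ u ∉ C ∧ v ∉ C) ∨ (w ∉ C ∧ u ∈ C ∧ v ∈ C)) →
      2 ≤ cutSurplus c D C) ∧
    (∀ C : Finset V, 0 ≤ cutSurplus c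
      (fun x y => D x y - (if s(x, y) = s(u, v) then 1 else 0)
        + (if s(x, y) = s(u, w) then 1 else 0)
        + (if s(x, y) = s(w, v) then 1 else 0)) C) := by
  classical
  have part1 : ∀ C : Finset V,
      ((w ∈ C ∧ u ∉ C ∧ v ∉ C) ∨ (w ∉ C ∧ u ∈ C ∧ v ∈ C)) →
      2 ≤ cutSurplus c D C := by
    intro C hC
    have huw : (u ∈ C ∧ w ∉ C) ∨ (w ∈ C ∧ u ∉ C) := by tauto
    have hwv : (w ∈ C ∧ v ∉ C) ∨ (v ∈ C ∧ w ∉ C) := by tauto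
    have hvw : (v ∈ C ∧ w ∉ C) ∨ (w ∈ C ∧ v ∉ C) := by tauto
    have hwu : (w ∈ C ∧ u ∉ C) ∨ (u ∈ C ∧ w ∉ C) := by tauto
    -- the total flow crossing the cut, weighted by crossings
    set Flo : ℝ := ∑ x : V, ∑ y : V, ∑ p : G.Path x y,
      f x y p * crossInd C (p : G.Walk x y) with hFlo
    -- capacity bound
    have capbound : Flo ≤ ∑ a ∈ C, ∑ b ∈ Cᶜ, c a b := by
      have hswap : Flo = ∑ a ∈ C, ∑ b ∈ Cᶜ, ∑ x : V, ∑ y : V, ∑ p : G.Path x y,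
          (if s(a, b) ∈ (p : G.Walk x y).edges then f x y p else 0) := by
        rw [hFlo]
        simp only [crossInd, Finset.mul_sum, mul_ite, mul_one, mul_zero]
        calc
          ∑ x : V, ∑ y : V, ∑ p : G.Path x y, ∑ a ∈ C, ∑ b ∈ Cᶜ,
              (if s(a, b) ∈ (p : G.Walk x y).edges then f x y p else 0)
            = ∑ x : V, ∑ y : V, ∑ a ∈ C, ∑ b ∈ Cᶜ, ∑ p : G.Path x y,
              (if s(a, b) ∈ (p : G.Walk x y).edges then f x y p else 0) :=
              Finset.sum_congr rfl fun x _ => Finset.sum_congr rfl fun y _ =>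
                sum_swap3 _ _ _ _
          _ = ∑ x : V, ∑ a ∈ C, ∑ b ∈ Cᶜ, ∑ y : V, ∑ p : G.Path x y,
              (if s(a, b) ∈ (p : G.Walk x y).edges then f x y p else 0) :=
              Finset.sum_congr rfl fun x _ => sum_swap3 _ _ _ _
          _ = ∑ a ∈ C, ∑ b ∈ Cᶜ, ∑ x : V, ∑ y : V, ∑ p : G.Path x y,
              (if s(a, b) ∈ (p : G.Walk x y).edges then f x y p else 0) :=
              sum_swap3 _ _ _ _
      rw [hswap]
      refine Finset.sum_le_sum fun a _ => Finset.sum_le_sum fun b _ => ?_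
      by_cases hadj : G.Adj a b
      · exact hfeas a b hadj
      · have hz : (∑ x : V, ∑ y : V, ∑ p : G.Path x y,
            (if s(a, b) ∈ (p : G.Walk x y).edges then f x y p else 0)) = 0 :=
          Finset.sum_eq_zero fun x _ => Finset.sum_eq_zero fun y _ =>
            Finset.sum_eq_zero fun p _ => by
              rw [if_neg]
              intro hmem
              exact hadj ((G.mem_edgeSet).1
                ((p : G.Walk x y).edges_subset_edgeSet hmem))
        rw [hz]
        exact hc0 a b
    -- split the flow into the four quadrants of the cut
    have quadsplit : Flo =
        ((∑ a ∈ C, ∑ b ∈ C, ∑ p : G.Path a b, f a b p * crossInd C (p : G.Walk a b))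
          + (∑ a ∈ C, ∑ b ∈ Cᶜ, ∑ p : G.Path a b, f a b p * crossInd C (p : G.Walk a b)))
        + ((∑ a ∈ Cᶜ, ∑ b ∈ C, ∑ p : G.Path a b, f a b p * crossInd C (p : G.Walk a b))
          + (∑ a ∈ Cᶜ, ∑ b ∈ Cᶜ, ∑ p : G.Path a b, f a b p * crossInd C (p : G.Walk a b))) := by
      rw [hFlo, ← Finset.sum_add_sum_compl C
        (fun x => ∑ y : V, ∑ p : G.Path x y, f x y p * crossInd C (p : G.Walk x y))]
      congr 1
      · rw [← Finset.sum_add_distrib]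
        exact Finset.sum_congr rfl fun x _ => (Finset.sum_add_sum_compl C _).symm
      · rw [← Finset.sum_add_distrib]
        exact Finset.sum_congr rfl fun x _ => (Finset.sum_add_sum_compl C _).symm
    -- the crossing quadrants dominate the demand across the cut
    have hb1 : (∑ a ∈ C, ∑ b ∈ Cᶜ, D a b)
        ≤ (∑ a ∈ C, ∑ b ∈ Cᶜ, ∑ p : G.Path a b, f a b p * crossInd C (p : G.Walk a b))
          + (∑ a ∈ Cᶜ, ∑ b ∈ C, ∑ p : G.Path a b, f a b p * crossInd C (p : G.Walk a b)) := by
      have hsw : (∑ a ∈ Cᶜ, ∑ b ∈ C, ∑ p : G.Path a b, f a b p * crossInd C (p : G.Walk a b))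
          = ∑ a ∈ C, ∑ b ∈ Cᶜ, ∑ p : G.Path b a, f b a p * crossInd C (p : G.Walk b a) :=
        Finset.sum_comm
      rw [hsw, ← Finset.sum_add_distrib]
      have step : ∀ a ∈ C, ∀ b ∈ Cᶜ, D a b ≤
          (∑ p : G.Path a b, f a b p * crossInd C (p : G.Walk a b))
          + (∑ p : G.Path b a, f b a p * crossInd C (p : G.Walk b a)) := by
        intro a ha b hb
        rw [Finset.mem_compl] at hb
        have hne : a ≠ b := fun h => hb (h ▸ ha)
        have l1 : (∑ p : G.Path a b, f a b p)
            ≤ ∑ p : G.Path a b, f a b p * crossInd C (p : G.Walk a b) := by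
          refine Finset.sum_le_sum fun p _ => ?_
          have h1 := aux_one_cross C (p : G.Walk a b) (Or.inl ⟨ha, hb⟩)
          nlinarith [hf0 a b p]
        have l2 : (∑ p : G.Path b a, f b a p)
            ≤ ∑ p : G.Path b a, f b a p * crossInd C (p : G.Walk b a) := by
          refine Finset.sum_le_sum fun p _ => ?_
          have h1 := aux_one_cross C (p : G.Walk b a) (Or.inr ⟨ha, hb⟩)
          nlinarith [hf0 b a p]
        linarith [hsat a b hne]
      calc (∑ a ∈ C, ∑ b ∈ Cᶜ, D a b)
          ≤ ∑ a ∈ C, ∑ b ∈ Cᶜ,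
            ((∑ p : G.Path a b, f a b p * crossInd C (p : G.Walk a b))
              + (∑ p : G.Path b a, f b a p * crossInd C (p : G.Walk b a))) := by
            refine Finset.sum_le_sum fun a ha => Finset.sum_le_sum fun b hb => step a ha b hb
        _ = ∑ a ∈ C, ((∑ b ∈ Cᶜ, ∑ p : G.Path a b, f a b p * crossInd C (p : G.Walk a b))
              + (∑ b ∈ Cᶜ, ∑ p : G.Path b a, f b a p * crossInd C (p : G.Walk b a))) :=
            Finset.sum_congr rfl fun a _ => Finset.sum_add_distrib
    -- the non-crossing quadrants dominate twice the demand `(u,v)`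
    have hSuv : 2 * (∑ p : G.Path u v, f u v p)
        ≤ ∑ p : G.Path u v, f u v p * crossInd C (p : G.Walk u v) := by
      rw [Finset.mul_sum]
      refine Finset.sum_le_sum fun p _ => ?_
      by_cases hz : f u v p = 0
      · rw [hz]; ring_nf; exact le_refl _
      · have h2 := aux_two_cross C (p : G.Walk u v) p.property.isTrail.edges_nodup
          (hthrough p hz) huw hwv
        nlinarith [hf0 u v p]
    have hSvu : 2 * (∑ p : G.Path v u, f v u p)
        ≤ ∑ p : G.Path v u, f v u p * crossInd C (p : G.Walk v u) := by
      rw [Finset.mul_sum]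
      refine Finset.sum_le_sum fun p _ => ?_
      by_cases hz : f v u p = 0
      · rw [hz]; ring_nf; exact le_refl _
      · have h2 := aux_two_cross C (p : G.Walk v u) p.property.isTrail.edges_nodup
          (hthrough' p hz) hvw hwu
        nlinarith [hf0 v u p]
    have hgnn : ∀ a b : V, 0 ≤ ∑ p : G.Path a b, f a b p * crossInd C (p : G.Walk a b) :=
      fun a b => Finset.sum_nonneg fun p _ =>
        mul_nonneg (hf0 a b p) (crossInd_nonneg C _)
    have hb2 : 2 * D u v ≤
        (∑ a ∈ C, ∑ b ∈ C, ∑ p : G.Path a b, f a b p * crossInd C (p : G.Walk a b))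
        + (∑ a ∈ Cᶜ, ∑ b ∈ Cᶜ, ∑ p : G.Path a b, f a b p * crossInd C (p : G.Walk a b)) := by
      have hsum : 2 * D u v ≤
          (∑ p : G.Path u v, f u v p * crossInd C (p : G.Walk u v))
          + (∑ p : G.Path v u, f v u p * crossInd C (p : G.Walk v u)) := by
        have := hsat u v huv
        linarith
      rcases hC with ⟨hwC, huC, hvC⟩ | ⟨hwC, huC, hvC⟩
      · have hcell := two_cell (Finset.mem_compl.2 huC) (Finset.mem_compl.2 hvC) huv
          (fun a b => ∑ p : G.Path a b, f a b p * crossInd C (p : G.Walk a b)) hgnn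
        have hq : 0 ≤ ∑ a ∈ C, ∑ b ∈ C, ∑ p : G.Path a b,
            f a b p * crossInd C (p : G.Walk a b) :=
          Finset.sum_nonneg fun a _ => Finset.sum_nonneg fun b _ => hgnn a b
        linarith
      · have hcell := two_cell huC hvC huv
          (fun a b => ∑ p : G.Path a b, f a b p * crossInd C (p : G.Walk a b)) hgnn
        have hq : 0 ≤ ∑ a ∈ Cᶜ, ∑ b ∈ Cᶜ, ∑ p : G.Path a b,
            f a b p * crossInd C (p : G.Walk a b) :=
          Finset.sum_nonneg fun a _ => Finset.sum_nonneg fun b _ => hgnn a b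
        linarith
    have expand : cutSurplus c D C
        = (∑ a ∈ C, ∑ b ∈ Cᶜ, c a b) - (∑ a ∈ C, ∑ b ∈ Cᶜ, D a b) := by
      simp only [cutSurplus, Finset.sum_sub_distrib]
    rw [expand]
    linarith
  refine ⟨part1, fun C => ?_⟩
  have expand2 : cutSurplus c
      (fun x y => D x y - (if s(x, y) = s(u, v) then 1 else 0)
        + (if s(x, y) = s(u, w) then 1 else 0)
        + (if s(x, y) = s(w, v) then 1 else 0)) C
      = cutSurplus c D C
        + (∑ x ∈ C, ∑ y ∈ Cᶜ, (if s(x, y) = s(u, v) then (1 : ℝ) else 0))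
        - (∑ x ∈ C, ∑ y ∈ Cᶜ, (if s(x, y) = s(u, w) then (1 : ℝ) else 0))
        - (∑ x ∈ C, ∑ y ∈ Cᶜ, (if s(x, y) = s(w, v) then (1 : ℝ) else 0)) := by
    simp only [cutSurplus]
    have h : (∑ x ∈ C, ∑ y ∈ Cᶜ,
        (c x y - (D x y - (if s(x, y) = s(u, v) then (1 : ℝ) else 0)
          + (if s(x, y) = s(u, w) then 1 else 0)
          + (if s(x, y) = s(w, v) then 1 else 0))))
        = ∑ x ∈ C, ∑ y ∈ Cᶜ, ((c x y - D x y)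
          + (if s(x, y) = s(u, v) then (1 : ℝ) else 0)
          - (if s(x, y) = s(u, w) then 1 else 0)
          - (if s(x, y) = s(w, v) then 1 else 0)) :=
      Finset.sum_congr rfl fun x _ => Finset.sum_congr rfl fun y _ => by ring
    rw [h]
    simp only [Finset.sum_add_distrib, Finset.sum_sub_distrib]
  rw [expand2, aux_ind_sum, aux_ind_sum, aux_ind_sum]
  by_cases hu : u ∈ C <;> by_cases hv : v ∈ C <;> by_cases hw0 : w ∈ C <;>
    simp only [hu, hv, hw0, not_true_eq_false, not_false_eq_true, true_and, false_and,
      and_true, and_false, or_true, true_or, or_false, false_or, if_true, if_false,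
      or_self, not_not] <;>
    first
      | linarith [hcut C]
      | linarith [part1 C (Or.inr ⟨hw0, hu, hv⟩)]
      | linarith [part1 C (Or.inl ⟨hw0, hu, hv⟩)]
end

section
/- In a series-parallel graph in which a pair (a,b) of vertices is joined by three internally vertex-disjoint paths, every path between internal vertices of two different ones of these three paths must pass through a or b; in particular {a,b} is a 2-vertex-cut separating the interiors of the three paths from each other. -/
open SimpleGraph

/-- Decompose a nontrivial path from `a` to `b`: its interior is the support of a walk `t`
from a neighbor `e` of `b` to a neighbor `c` of `a`. -/
lemma interior_decomp {V : Type*} {G : SimpleGraph V} {a b x : V} (hab : a ≠ b)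
    (p : G.Walk a b) (hp : p.IsPath) (hx : x ∈ p.support) (hxa : x ≠ a) (hxb : x ≠ b) :
    ∃ (c e : V) (t : G.Walk e c), G.Adj a c ∧ G.Adj b e ∧
      (∀ v, v ∈ t.support ↔ v ∈ p.support ∧ v ≠ a ∧ v ≠ b) := by
  obtain ⟨c, hac, r, rfl⟩ := Walk.exists_eq_cons_of_ne hab p
  have hps := (Walk.cons_isPath_iff _ _).1 hp
  have hcb : c ≠ b := by
    rintro rfl
    have hnil := (Walk.isPath_iff_eq_nil (p := r)).1 hps.1
    subst hnil
    simp only [Walk.support_cons, Walk.support_nil, List.mem_cons, List.mem_singleton] at hx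
    rcases hx with rfl | rfl | h
    · exact hxa rfl
    · exact hxb rfl
    · simp at h
  obtain ⟨e, hbe, t, ht⟩ := Walk.exists_eq_cons_of_ne (Ne.symm hcb) r.reverse
  have hmemr : ∀ v, v ∈ r.support ↔ v = b ∨ v ∈ t.support := by
    intro v
    have h1 : v ∈ r.support ↔ v ∈ r.reverse.support := by
      rw [Walk.support_reverse, List.mem_reverse]
    rw [h1, ht, Walk.support_cons, List.mem_cons]
  have hbt : b ∉ t.support := by
    have h2 := hps.1.reverse
    rw [ht] at h2
    exact ((Walk.cons_isPath_iff _ _).1 h2).2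
  have hat : a ∉ t.support := fun h => hps.2 ((hmemr a).2 (Or.inr h))
  refine ⟨c, e, t, hac, hbe, fun v => ⟨fun h => ⟨?_, ?_, ?_⟩, ?_⟩⟩
  · rw [Walk.support_cons]
    exact List.mem_cons_of_mem _ ((hmemr v).2 (Or.inr h))
  · rintro rfl; exact hat h
  · rintro rfl; exact hbt h
  · rintro ⟨hv, hva, hvb⟩
    rw [Walk.support_cons, List.mem_cons] at hv
    rcases hv with rfl | hv
    · exact absurd rfl hva
    rcases (hmemr v).1 hv with rfl | h
    · exact absurd rfl hvb
    · exact h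

/-- Strip the final vertex `b` from a path from `a` to `b`. -/
lemma end_decomp {V : Type*} {G : SimpleGraph V} {a b : V} (hab : a ≠ b)
    (p : G.Walk a b) (hp : p.IsPath) :
    ∃ (c : V) (r : G.Walk c a), G.Adj b c ∧ (∀ v, v ∈ r.support ↔ v ∈ p.support ∧ v ≠ b) := by
  obtain ⟨c, hbc, r, hr⟩ := Walk.exists_eq_cons_of_ne (Ne.symm hab) p.reverse
  have hmem : ∀ v, v ∈ p.support ↔ v = b ∨ v ∈ r.support := by
    intro v
    have h1 : v ∈ p.support ↔ v ∈ p.reverse.support := by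
      rw [Walk.support_reverse, List.mem_reverse]
    rw [h1, hr, Walk.support_cons, List.mem_cons]
  have hbr : b ∉ r.support := by
    have h2 := hp.reverse
    rw [hr] at h2
    exact ((Walk.cons_isPath_iff _ _).1 h2).2
  refine ⟨c, r, hbc, fun v => ⟨fun h => ⟨(hmem v).2 (Or.inr h), fun hvb => hbr (hvb ▸ h)⟩, ?_⟩⟩
  rintro ⟨hv, hvb⟩
  rcases (hmem v).1 hv with rfl | h
  · exact absurd rfl hvb
  · exact h

lemma k4_of {V : Type*} [DecidableEq V] (G : SimpleGraph V) {a b : V} (hab : a ≠ b)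
    (p1 p2 p3 : G.Walk a b) (hp1 : p1.IsPath) (hp2 : p2.IsPath) (hp3 : p3.IsPath)
    (h12 : ∀ w, w ∈ p1.support → w ∈ p2.support → w = a ∨ w = b)
    (h13 : ∀ w, w ∈ p1.support → w ∈ p3.support → w = a ∨ w = b)
    (h23 : ∀ w, w ∈ p2.support → w ∈ p3.support → w = a ∨ w = b)
    {x y : V} (hx : x ∈ p1.support) (hxa : x ≠ a) (hxb : x ≠ b)
    (hy : y ∈ p2.support) (hya : y ≠ a) (hyb : y ≠ b)
    (q : G.Walk x y) (hq : q.IsPath) (hqa : a ∉ q.support) (hqb : b ∉ q.support)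
    (hcl : ∀ v ∈ q.support, v ≠ x → v ≠ y →
      v ∉ p1.support ∧ v ∉ p2.support ∧ v ∉ p3.support) :
    HasMinorPattern G (⊤ : SimpleGraph (Fin 4)) := by
  obtain ⟨c1, e1, t1, hac1, hbe1, int1⟩ := interior_decomp hab p1 hp1 hx hxa hxb
  obtain ⟨c2, e2, t2, hac2, hbe2, int2⟩ := interior_decomp hab p2 hp2 hy hya hyb
  obtain ⟨c3, r3, hbc3, mem3⟩ := end_decomp hab p3 hp3
  have hxy : x ≠ y := by
    rintro rfl
    rcases h12 x hx hy with rfl | rfl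
    · exact hxa rfl
    · exact hxb rfl
  obtain ⟨z, hyz, u, hu⟩ := Walk.exists_eq_cons_of_ne (Ne.symm hxy) q.reverse
  have memq : ∀ v, v ∈ q.support ↔ v = y ∨ v ∈ u.support := by
    intro v
    have h1 : v ∈ q.support ↔ v ∈ q.reverse.support := by
      rw [Walk.support_reverse, List.mem_reverse]
    rw [h1, hu, Walk.support_cons, List.mem_cons]
  have hyu : y ∉ u.support := by
    have h2 := hq.reverse
    rw [hu] at h2
    exact ((Walk.cons_isPath_iff _ _).1 h2).2
  have hust : ∀ v ∈ u.support, v ∈ q.support := fun v h => (memq v).2 (Or.inr h)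
  have hx1 : x ∈ t1.support := (int1 x).2 ⟨hx, hxa, hxb⟩
  have hy2 : y ∈ t2.support := (int2 y).2 ⟨hy, hya, hyb⟩
  -- the walk whose support is (interior of p1) ∪ (support of q minus y)
  let W : G.Walk e1 c1 :=
    (t1.takeUntil x hx1).append (u.reverse.append (u.append (t1.dropUntil x hx1)))
  have memW : ∀ v, v ∈ W.support ↔ v ∈ t1.support ∨ v ∈ u.support := by
    intro v
    have ht := Walk.mem_support_append_iff (t := v) (t1.takeUntil x hx1) (t1.dropUntil x hx1)
    rw [Walk.take_spec] at ht
    show v ∈ (Walk.append _ _).support ↔ _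
    rw [Walk.mem_support_append_iff, Walk.mem_support_append_iff,
      Walk.mem_support_append_iff, ht]
    have hrev : v ∈ u.reverse.support ↔ v ∈ u.support := by
      rw [Walk.support_reverse, List.mem_reverse]
    rw [hrev]
    tauto
  -- interior facts in convenient form
  have t1sub : ∀ v ∈ t1.support, v ∈ p1.support ∧ v ≠ a ∧ v ≠ b := fun v h => (int1 v).1 h
  have t2sub : ∀ v ∈ t2.support, v ∈ p2.support ∧ v ≠ a ∧ v ≠ b := fun v h => (int2 v).1 h
  -- six disjointness facts
  have d01 : Disjoint {v | v ∈ r3.support} ({b} : Set V) := by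
    rw [Set.disjoint_singleton_right]
    intro hv
    exact ((mem3 b).1 hv).2 rfl
  have hu3 : ∀ v ∈ u.support, v ∉ p3.support := by
    intro v hvu hvp
    have hvq := hust v hvu
    have hvy : v ≠ y := fun hh => hyu (hh ▸ hvu)
    by_cases hvx : v = x
    · subst hvx
      rcases h13 v hx hvp with rfl | rfl
      · exact hxa rfl
      · exact hxb rfl
    · exact (hcl v hvq hvx hvy).2.2 hvp
  have hu2 : ∀ v ∈ u.support, v ∉ p2.support := by
    intro v hvu hvp
    have hvq := hust v hvu
    have hvy : v ≠ y := fun hh => hyu (hh ▸ hvu)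
    by_cases hvx : v = x
    · subst hvx
      rcases h12 v hx hvp with rfl | rfl
      · exact hxa rfl
      · exact hxb rfl
    · exact (hcl v hvq hvx hvy).2.1 hvp
  have d02 : Disjoint {v | v ∈ r3.support} {v | v ∈ W.support} := by
    rw [Set.disjoint_left]
    intro v hv hw
    have hv3 : v ∈ p3.support := ((mem3 v).1 hv).1
    rcases (memW v).1 hw with h | h
    · rcases t1sub v h with ⟨hv1, hva, hvb⟩
      rcases h13 v hv1 hv3 with rfl | rfl
      · exact hva rfl
      · exact hvb rfl
    · exact hu3 v h hv3
  have d03 : Disjoint {v | v ∈ r3.support} {v | v ∈ t2.support} := by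
    rw [Set.disjoint_left]
    intro v hv hw
    have hv3 : v ∈ p3.support := ((mem3 v).1 hv).1
    rcases t2sub v hw with ⟨hv2, hva, hvb⟩
    rcases h23 v hv2 hv3 with rfl | rfl
    · exact hva rfl
    · exact hvb rfl
  have d12 : Disjoint ({b} : Set V) {v | v ∈ W.support} := by
    rw [Set.disjoint_singleton_left]
    intro hw
    rcases (memW b).1 hw with h | h
    · exact (t1sub b h).2.2 rfl
    · exact hqb (hust b h)
  have d13 : Disjoint ({b} : Set V) {v | v ∈ t2.support} := by
    rw [Set.disjoint_singleton_left]
    intro hw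
    exact (t2sub b hw).2.2 rfl
  have d23 : Disjoint {v | v ∈ W.support} {v | v ∈ t2.support} := by
    rw [Set.disjoint_left]
    intro v hv hw
    have hv2 : v ∈ p2.support := (t2sub v hw).1
    rcases (memW v).1 hv with h | h
    · rcases t1sub v h with ⟨hv1, hva, hvb⟩
      rcases h12 v hv1 hv2 with rfl | rfl
      · exact hva rfl
      · exact hvb rfl
    · exact hu2 v h hv2
  -- assemble the K4 minor
  refine ⟨![{v | v ∈ r3.support}, {b}, {v | v ∈ W.support}, {v | v ∈ t2.support}],
    ?_, ?_, ?_, ?_⟩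
  · intro i
    fin_cases i
    · exact ⟨a, r3.end_mem_support⟩
    · exact ⟨b, rfl⟩
    · exact ⟨x, (memW x).2 (Or.inl hx1)⟩
    · exact ⟨y, hy2⟩
  · intro i
    have hb1 : ({b} : Set V) = {v | v ∈ (Walk.nil : G.Walk b b).support} := by
      ext v; simp
    fin_cases i
    · exact Walk.connected_induce_support r3
    · exact hb1 ▸ Walk.connected_induce_support (Walk.nil : G.Walk b b)
    · exact Walk.connected_induce_support W
    · exact Walk.connected_induce_support t2
  · intro i j hij
    fin_cases i <;> fin_cases j
    exacts [absurd rfl hij, d01, d02, d03,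
      d01.symm, absurd rfl hij, d12, d13,
      d02.symm, d12.symm, absurd rfl hij, d23,
      d03.symm, d13.symm, d23.symm, absurd rfl hij]
  · intro i j hadj
    rw [top_adj] at hadj
    fin_cases i <;> fin_cases j
    · exact absurd rfl hadj
    · exact ⟨c3, r3.start_mem_support, b, rfl, hbc3.symm⟩
    · exact ⟨a, r3.end_mem_support, c1, (memW c1).2 (Or.inl t1.end_mem_support), hac1⟩
    · exact ⟨a, r3.end_mem_support, c2, t2.end_mem_support, hac2⟩
    · exact ⟨b, rfl, c3, r3.start_mem_support, hbc3⟩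
    · exact absurd rfl hadj
    · exact ⟨b, rfl, e1, (memW e1).2 (Or.inl t1.start_mem_support), hbe1⟩
    · exact ⟨b, rfl, e2, t2.start_mem_support, hbe2⟩
    · exact ⟨c1, (memW c1).2 (Or.inl t1.end_mem_support), a, r3.end_mem_support, hac1.symm⟩
    · exact ⟨e1, (memW e1).2 (Or.inl t1.start_mem_support), b, rfl, hbe1.symm⟩
    · exact absurd rfl hadj
    · exact ⟨z, (memW z).2 (Or.inr u.start_mem_support), y, hy2, hyz.symm⟩
    · exact ⟨c2, t2.end_mem_support, a, r3.end_mem_support, hac2.symm⟩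
    · exact ⟨e2, t2.start_mem_support, b, rfl, hbe2.symm⟩
    · exact ⟨y, hy2, z, (memW z).2 (Or.inr u.start_mem_support), hyz⟩
    · exact absurd rfl hadj

/-- In a series-parallel graph, if `a` and `b` are joined by three internally
vertex-disjoint paths (each with an internal vertex), then every simple path
between internal vertices of two different ones of these paths passes
through `a` or `b`. -/
theorem stmt17 {V : Type*} [DecidableEq V] (G : SimpleGraph V)
    (hsp : SeriesParallel G) (a b : V) (hab : a ≠ b)
    (paths : Fin 3 → G.Walk a b)
    (hpath : ∀ i, (paths i).IsPath)
    (hint : ∀ i, ∃ w ∈ (paths i).support, w ≠ a ∧ w ≠ b)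
    (hdisj : ∀ i j, i ≠ j → ∀ w, w ∈ (paths i).support → w ∈ (paths j).support →
      w = a ∨ w = b) :
    ∀ i j, i ≠ j → ∀ x y : V,
      x ∈ (paths i).support → x ≠ a → x ≠ b →
      y ∈ (paths j).support → y ≠ a → y ≠ b →
      ∀ q : G.Walk x y, q.IsPath → a ∈ q.support ∨ b ∈ q.support := by
  have key : ∀ n : ℕ, ∀ i j : Fin 3, i ≠ j → ∀ x y : V, ∀ q : G.Walk x y,
      q.length ≤ n → q.IsPath →
      x ∈ (paths i).support → x ≠ a → x ≠ b →
      y ∈ (paths j).support → y ≠ a → y ≠ b →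
      a ∉ q.support → b ∉ q.support → False := by
    intro n
    induction n with
    | zero =>
      intro i j hij x y q hlen _ hx hxa hxb hy _ _ _ _
      have hxy : x = y := Walk.eq_of_length_eq_zero (Nat.le_zero.1 hlen)
      subst hxy
      rcases hdisj i j hij x hx hy with rfl | rfl
      · exact hxa rfl
      · exact hxb rfl
    | succ n ih =>
      intro i j hij x y q hlen hq hx hxa hxb hy hya hyb hqa hqb
      by_cases hcl : ∀ v ∈ q.support, v ≠ x → v ≠ y → ∀ m : Fin 3, v ∉ (paths m).support
      · have hthird : ∀ i' j' : Fin 3, i' ≠ j' → ∃ k, k ≠ i' ∧ k ≠ j' := by decide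
        obtain ⟨k, hki, hkj⟩ := hthird i j hij
        exact hsp (k4_of G hab (paths i) (paths j) (paths k)
          (hpath i) (hpath j) (hpath k)
          (hdisj i j hij) (hdisj i k (Ne.symm hki)) (hdisj j k (Ne.symm hkj))
          hx hxa hxb hy hya hyb q hq hqa hqb
          (fun v hv h1 h2 => ⟨hcl v hv h1 h2 i, hcl v hv h1 h2 j, hcl v hv h1 h2 k⟩))
      · push_neg at hcl
        obtain ⟨v, hvq, hvx, hvy, m, hvm⟩ := hcl
        have hva : v ≠ a := fun h => hqa (h ▸ hvq)
        have hvb : v ≠ b := fun h => hqb (h ▸ hvq)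
        have hlen2 : (q.takeUntil v hvq).length + (q.dropUntil v hvq).length = q.length := by
          rw [← Walk.length_append, Walk.take_spec]
        by_cases him : m = i
        · subst him
          have ht0 : (q.takeUntil v hvq).length ≠ 0 := fun h0 =>
            hvx (Walk.eq_of_length_eq_zero h0).symm
          have hlen3 : (q.dropUntil v hvq).length ≤ n := by omega
          exact ih m j hij v y (q.dropUntil v hvq) hlen3 (hq.dropUntil hvq)
            hvm hva hvb hy hya hyb
            (fun h => hqa (q.support_dropUntil_subset hvq h))
            (fun h => hqb (q.support_dropUntil_subset hvq h))
        · have hd0 : (q.dropUntil v hvq).length ≠ 0 := fun h0 =>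
            hvy (Walk.eq_of_length_eq_zero h0)
          have hlen3 : (q.takeUntil v hvq).length ≤ n := by omega
          exact ih i m (fun h => him h.symm) x v (q.takeUntil v hvq) hlen3 (hq.takeUntil hvq)
            hx hxa hxb hvm hva hvb
            (fun h => hqa (q.support_takeUntil_subset hvq h))
            (fun h => hqb (q.support_takeUntil_subset hvq h))
  intro i j hij x y hx hxa hxb hy hya hyb q hq
  by_contra h
  push_neg at h
  exact key q.length i j hij x y q le_rfl hq hx hxa hxb hy hya hyb h.1 h.2
end
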